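/- arXiv:2510.24423 — 12 statements merged into one kernel-verified Lean document; each statement's English description precedes it below -/
import Mathlib

section
/- Let X be a topological space and let 𝒜 be a family of open subsets of X such that (a) for any x, y ∈ X with x ≠ y there exist A, B ∈ 𝒜 with x ∈ A, y ∈ B and A ∩ B = ∅, and (b) for any x ∈ X there exist U ∈ 𝒜 and a compact set C ⊆ X with x ∈ U ⊆ C. Then 𝒜 is a subbasis for the topology of X, i.e., the topology generated by 𝒜 equals the given topology of X. -/
open Topology

/-- If a family `𝒜` of open subsets of a topological space `X` separates points by
disjoint members (𝒜-Hausdorffness) and every point has a member of `𝒜` around it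
contained in a compact set (𝒜-local compactness), then `𝒜` is a subbasis for the
topology of `X`. -/
theorem subbasis_of_hausdorff_of_locally_compact
    {X : Type*} [T : TopologicalSpace X] (𝒜 : Set (Set X))
    (hopen : ∀ A ∈ 𝒜, IsOpen A)
    (hHaus : ∀ x y : X, x ≠ y →
      ∃ A ∈ 𝒜, ∃ B ∈ 𝒜, x ∈ A ∧ y ∈ B ∧ A ∩ B = ∅)
    (hLC : ∀ x : X, ∃ U ∈ 𝒜, ∃ C : Set X, IsCompact C ∧ x ∈ U ∧ U ⊆ C) :
    TopologicalSpace.generateFrom 𝒜 = T := by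
  have hle : T ≤ TopologicalSpace.generateFrom 𝒜 := le_generateFrom hopen
  have hT2 : @T2Space X (TopologicalSpace.generateFrom 𝒜) := by
    refine @T2Space.mk X (TopologicalSpace.generateFrom 𝒜) ?_
    intro x y hxy
    obtain ⟨A, hA, B, hB, hxA, hyB, hAB⟩ := hHaus x y hxy
    exact ⟨A, B, TopologicalSpace.GenerateOpen.basic A hA,
      TopologicalSpace.GenerateOpen.basic B hB, hxA, hyB,
      Set.disjoint_iff_inter_eq_empty.mpr hAB⟩
  refine le_antisymm ?_ hle
  rw [TopologicalSpace.le_def]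
  intro V hV
  rw [@isOpen_iff_forall_mem_open X (TopologicalSpace.generateFrom 𝒜) V]
  intro x hxV
  obtain ⟨U, hU, C, hCcomp, hxU, hUC⟩ := hLC x
  have hKcomp : IsCompact (C ∩ Vᶜ) := hCcomp.inter_right (isClosed_compl_iff.mpr hV)
  have hKcomp' : @IsCompact X (TopologicalSpace.generateFrom 𝒜) (C ∩ Vᶜ) := by
    have := @IsCompact.image X X T (TopologicalSpace.generateFrom 𝒜) (C ∩ Vᶜ) id hKcomp
      (continuous_id_of_le hle)
    simpa using this
  have hKclosed : @IsClosed X (TopologicalSpace.generateFrom 𝒜) (C ∩ Vᶜ) :=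
    @IsCompact.isClosed X (TopologicalSpace.generateFrom 𝒜) hT2 _ hKcomp'
  refine ⟨U ∩ (C ∩ Vᶜ)ᶜ, ?_, ?_, Set.mem_inter hxU (fun h => h.2 hxV)⟩
  · rintro y ⟨hyU, hyK⟩
    by_contra hyV
    exact hyK ⟨hUC hyU, hyV⟩
  · exact @IsOpen.inter X (TopologicalSpace.generateFrom 𝒜) U ((C ∩ Vᶜ)ᶜ)
      (TopologicalSpace.GenerateOpen.basic U hU) hKclosed.isOpen_compl
end

section
/- Let (X,d) be a Lorentzian metric space with no chronological boundary, with topology 𝒯. Then 𝒯 is Hausdorff and locally compact; 𝒯 is the unique topology on X satisfying axiom (ii) (i.e., if 𝒯' is another topology on X for which d is continuous and for every x,y ∈ X and ε > 0 the set I_ε ∩ (closure(I(x,y)) × closure(I(x,y))) is compact, then 𝒯' = 𝒯); and the sets of the form {q : a < d(p,q) < b} ∩ {q : c < d(q,r) < e}, with p, r ∈ X and a, b, c, e ∈ ℝ ∪ {−∞, +∞}, form a subbasis for 𝒯. -/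
open Filter Topology Set

variable {X : Type*}

/-- Axiom (ii) of a Lorentzian metric space, relative to a given topology `T`:
`d` is continuous and, for all `x y` and `ε > 0`, the set
`I_ε ∩ (closure (I(x,y)) × closure (I(x,y)))` is compact. -/
def LMSAxiom2 (T : TopologicalSpace X) (d : X → X → ℝ) : Prop :=
  letI := T
  Continuous (fun p : X × X => d p.1 p.2) ∧
    ∀ x y : X, ∀ ε : ℝ, 0 < ε →
      IsCompact ({p : X × X | ε ≤ d p.1 p.2} ∩
        (closure {z : X | 0 < d x z ∧ 0 < d z y} ×ˢ closure {z : X | 0 < d x z ∧ 0 < d z y}))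

/-- Lorentzian metric space (LMS): `d ≥ 0`, reverse triangle inequality,
axiom (ii) for the topology `T`, and `d` distinguishes points. -/
def IsLMS (T : TopologicalSpace X) (d : X → X → ℝ) : Prop :=
  (∀ x y : X, 0 ≤ d x y) ∧
  (∀ x y z : X, 0 < d x y → 0 < d y z → d x y + d y z ≤ d x z) ∧
  LMSAxiom2 T d ∧
  (∀ x y : X, x ≠ y → ∃ z : X, d x z ≠ d y z ∨ d z x ≠ d z y)

/-- No chronological boundary: `I(X) = X`. -/
def NoBoundary (d : X → X → ℝ) : Prop :=
  ∀ x : X, (∃ p, 0 < d p x) ∧ (∃ q, 0 < d x q)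

/-- Countably generated: some countable set `G` satisfies `I(G) = X`. -/
def CountablyGenerated (d : X → X → ℝ) : Prop :=
  ∃ G : Set X, G.Countable ∧ ∀ x : X, (∃ p ∈ G, 0 < d p x) ∧ (∃ q ∈ G, 0 < d x q)

/-- The causal relation `J` defined from the Lorentzian distance. -/
def Jrel (d : X → X → ℝ) (x y : X) : Prop :=
  ∀ p : X, d p x ≤ d p y ∧ d y p ≤ d x p

/-- Strict causal relation: `x < y`. -/
def CausalLt (d : X → X → ℝ) (x y : X) : Prop :=
  Jrel d x y ∧ x ≠ y

/-- An isocausal curve with parameter domain `S`. -/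
def IsIsocausalOn (T : TopologicalSpace X) (d : X → X → ℝ) (γ : ℝ → X) (S : Set ℝ) : Prop :=
  letI := T
  ContinuousOn γ S ∧ ∀ s ∈ S, ∀ t ∈ S, s < t → CausalLt d (γ s) (γ t)

/-- A maximizing curve on the domain `S`. -/
def MaximizingOn (d : X → X → ℝ) (γ : ℝ → X) (S : Set ℝ) : Prop :=
  ∀ t ∈ S, ∀ t' ∈ S, ∀ t'' ∈ S, t < t' → t' < t'' →
    d (γ t) (γ t') + d (γ t') (γ t'') = d (γ t) (γ t'')

/-- A time function: continuous and strictly increasing on causal pairs. -/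
def IsTimeFunction (T : TopologicalSpace X) (d : X → X → ℝ) (τ : X → ℝ) : Prop :=
  letI := T
  Continuous τ ∧ ∀ x y : X, CausalLt d x y → τ x < τ y

namespace LMSUnique

/-- The subbasic family. -/
def SB (d : X → X → ℝ) : Set (Set X) :=
  {S : Set X | ∃ (p r : X) (a b c e : EReal),
    S = {q : X | (a < (d p q : EReal) ∧ (d p q : EReal) < b) ∧
                 (c < (d q r : EReal) ∧ (d q r : EReal) < e)}}

section

variable [ts : TopologicalSpace X] {d : X → X → ℝ}

lemma cont_left (hc : Continuous fun p : X × X => d p.1 p.2) (x : X) :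
    Continuous fun y => d x y := hc.comp (Continuous.prodMk_right x)

lemma cont_right (hc : Continuous fun p : X × X => d p.1 p.2) (x : X) :
    Continuous fun y => d y x := hc.comp (continuous_id.prodMk continuous_const)

lemma t2_of_sep (hc : Continuous fun p : X × X => d p.1 p.2)
    (hsep : ∀ x y : X, x ≠ y → ∃ z : X, d x z ≠ d y z ∨ d z x ≠ d z y) :
    T2Space X := by
  refine ⟨fun x y hxy => ?_⟩
  obtain ⟨z, hz | hz⟩ := hsep x y hxy
  · obtain ⟨u, v, hu, hv, hxu, hyv, huv⟩ := t2_separation hz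
    exact ⟨_, _, hu.preimage (cont_right hc z), hv.preimage (cont_right hc z),
      hxu, hyv, huv.preimage _⟩
  · obtain ⟨u, v, hu, hv, hxu, hyv, huv⟩ := t2_separation hz
    exact ⟨_, _, hu.preimage (cont_left hc z), hv.preimage (cont_left hc z),
      hxu, hyv, huv.preimage _⟩

lemma compact_nbhd
    (htri : ∀ x y z : X, 0 < d x y → 0 < d y z → d x y + d y z ≤ d x z)
    (hax : LMSAxiom2 ts d)
    (hsep : ∀ x y : X, x ≠ y → ∃ z : X, d x z ≠ d y z ∨ d z x ≠ d z y)
    (hnb : NoBoundary d) (x : X) :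
    ∃ (p q : X) (ε : ℝ) (C : Set X), 0 < ε ∧ ε < d p x ∧ ε < d x q ∧
      IsCompact C ∧ {u | ε < d p u ∧ ε < d u q} ⊆ C := by
  obtain ⟨hc, hcomp⟩ := hax
  have hT2 : T2Space X := t2_of_sep hc hsep
  obtain ⟨⟨p, hpx⟩, ⟨q, hxq⟩⟩ := hnb x
  obtain ⟨⟨p', hp'⟩, -⟩ := hnb p
  obtain ⟨-, ⟨q', hq'⟩⟩ := hnb q
  set ε := min (d p x) (d x q) / 2 with hεdef
  have hm1 : min (d p x) (d x q) ≤ d p x := min_le_left _ _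
  have hm2 : min (d p x) (d x q) ≤ d x q := min_le_right _ _
  have hm0 : 0 < min (d p x) (d x q) := lt_min hpx hxq
  have hε0 : 0 < ε := by rw [hεdef]; linarith
  have hε1 : ε < d p x := by rw [hεdef]; linarith
  have hε2 : ε < d x q := by rw [hεdef]; linarith
  have hpq : 0 < d p q := lt_of_lt_of_le (add_pos hpx hxq) (htri p x q hpx hxq)
  have hpq' : 0 < d p q' := lt_of_lt_of_le (add_pos hpq hq') (htri p q q' hpq hq')
  have hp'q : 0 < d p' q := lt_of_lt_of_le (add_pos hp' hpq) (htri p' p q hp' hpq)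
  set A := closure {z : X | 0 < d p' z ∧ 0 < d z q'} with hA
  have hpA : p ∈ A := subset_closure ⟨hp', hpq'⟩
  have hqA : q ∈ A := subset_closure ⟨hp'q, hq'⟩
  have hK : IsCompact ({pr : X × X | ε ≤ d pr.1 pr.2} ∩ A ×ˢ A) := hcomp p' q' ε hε0
  have hC1 : IsCompact (Prod.snd '' (({pr : X × X | ε ≤ d pr.1 pr.2} ∩ A ×ˢ A) ∩
      ({p} ×ˢ (univ : Set X)))) :=
    (hK.inter_right ((isClosed_singleton).prod isClosed_univ)).image continuous_snd
  have hC2 : IsCompact (Prod.fst '' (({pr : X × X | ε ≤ d pr.1 pr.2} ∩ A ×ˢ A) ∩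
      ((univ : Set X) ×ˢ {q}))) :=
    (hK.inter_right (isClosed_univ.prod isClosed_singleton)).image continuous_fst
  refine ⟨p, q, ε, _, hε0, hε1, hε2, hC1.inter hC2, ?_⟩
  rintro u ⟨h1, h2⟩
  have hdpu : 0 < d p u := hε0.trans h1
  have hduq : 0 < d u q := hε0.trans h2
  have hp'u : 0 < d p' u := lt_of_lt_of_le (add_pos hp' hdpu) (htri p' p u hp' hdpu)
  have huq' : 0 < d u q' := lt_of_lt_of_le (add_pos hduq hq') (htri u q q' hduq hq')
  have huA : u ∈ A := subset_closure ⟨hp'u, huq'⟩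
  constructor
  · exact ⟨(p, u), ⟨⟨h1.le, hpA, huA⟩, rfl, trivial⟩, rfl⟩
  · exact ⟨(u, q), ⟨⟨h2.le, huA, hqA⟩, trivial, rfl⟩, rfl⟩

lemma isOpen_SB (hc : Continuous fun p : X × X => d p.1 p.2) :
    ∀ s ∈ SB d, IsOpen s := by
  rintro s ⟨p, r, a, b, c, e, rfl⟩
  have h1 : Continuous fun q : X => ((d p q : EReal)) :=
    continuous_coe_real_ereal.comp (cont_left hc p)
  have h2 : Continuous fun q : X => ((d q r : EReal)) :=
    continuous_coe_real_ereal.comp (cont_right hc r)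
  exact ((isOpen_Ioo.preimage h1).inter (isOpen_Ioo.preimage h2))

end

section NoTop

variable {d : X → X → ℝ}

lemma sep_r (z x y : X) (h : d x z < d y z) :
    ∃ u v : Set X, u ∈ SB d ∧ v ∈ SB d ∧ x ∈ u ∧ y ∈ v ∧ Disjoint u v := by
  set m : ℝ := (d x z + d y z) / 2 with hm
  refine ⟨{q | ((⊥ : EReal) < (d z q : EReal) ∧ (d z q : EReal) < (⊤ : EReal)) ∧
              ((⊥ : EReal) < (d q z : EReal) ∧ (d q z : EReal) < (m : EReal))},
          {q | ((⊥ : EReal) < (d z q : EReal) ∧ (d z q : EReal) < (⊤ : EReal)) ∧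
              (((m : ℝ) : EReal) < (d q z : EReal) ∧ (d q z : EReal) < (⊤ : EReal))},
          ⟨z, z, ⊥, ⊤, ⊥, (m : EReal), rfl⟩, ⟨z, z, ⊥, ⊤, (m : EReal), ⊤, rfl⟩,
          ?_, ?_, ?_⟩
  · refine ⟨⟨EReal.bot_lt_coe _, EReal.coe_lt_top _⟩, EReal.bot_lt_coe _, ?_⟩
    exact_mod_cast (by linarith : d x z < m)
  · refine ⟨⟨EReal.bot_lt_coe _, EReal.coe_lt_top _⟩, ?_, EReal.coe_lt_top _⟩
    exact_mod_cast (by linarith : m < d y z)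
  · rw [Set.disjoint_left]
    rintro q ⟨-, -, h1⟩ ⟨-, h2, -⟩
    exact absurd (h2.trans h1) (lt_irrefl _)

lemma sep_l (z x y : X) (h : d z x < d z y) :
    ∃ u v : Set X, u ∈ SB d ∧ v ∈ SB d ∧ x ∈ u ∧ y ∈ v ∧ Disjoint u v := by
  set m : ℝ := (d z x + d z y) / 2 with hm
  refine ⟨{q | ((⊥ : EReal) < (d z q : EReal) ∧ (d z q : EReal) < (m : EReal)) ∧
              ((⊥ : EReal) < (d q z : EReal) ∧ (d q z : EReal) < (⊤ : EReal))},
          {q | (((m : ℝ) : EReal) < (d z q : EReal) ∧ (d z q : EReal) < (⊤ : EReal)) ∧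
              ((⊥ : EReal) < (d q z : EReal) ∧ (d q z : EReal) < (⊤ : EReal))},
          ⟨z, z, ⊥, (m : EReal), ⊥, ⊤, rfl⟩, ⟨z, z, (m : EReal), ⊤, ⊥, ⊤, rfl⟩,
          ?_, ?_, ?_⟩
  · refine ⟨⟨EReal.bot_lt_coe _, ?_⟩, EReal.bot_lt_coe _, EReal.coe_lt_top _⟩
    exact_mod_cast (by linarith : d z x < m)
  · refine ⟨⟨?_, EReal.coe_lt_top _⟩, EReal.bot_lt_coe _, EReal.coe_lt_top _⟩
    exact_mod_cast (by linarith : m < d z y)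
  · rw [Set.disjoint_left]
    rintro q ⟨⟨-, h1⟩, -⟩ ⟨⟨h2, -⟩, -⟩
    exact absurd (h2.trans h1) (lt_irrefl _)

lemma gen_t2 (d : X → X → ℝ)
    (hsep : ∀ x y : X, x ≠ y → ∃ z : X, d x z ≠ d y z ∨ d z x ≠ d z y) :
    @T2Space X (TopologicalSpace.generateFrom (SB d)) := by
  letI : TopologicalSpace X := TopologicalSpace.generateFrom (SB d)
  refine ⟨fun x y hxy => ?_⟩
  have key : ∃ u v : Set X, u ∈ SB d ∧ v ∈ SB d ∧ x ∈ u ∧ y ∈ v ∧ Disjoint u v := by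
    obtain ⟨z, hz | hz⟩ := hsep x y hxy
    · rcases hz.lt_or_gt with h | h
      · exact sep_r z x y h
      · obtain ⟨u, v, hu, hv, hyu, hxv, huv⟩ := sep_r z y x h
        exact ⟨v, u, hv, hu, hxv, hyu, huv.symm⟩
    · rcases hz.lt_or_gt with h | h
      · exact sep_l z x y h
      · obtain ⟨u, v, hu, hv, hyu, hxv, huv⟩ := sep_l z y x h
        exact ⟨v, u, hv, hu, hxv, hyu, huv.symm⟩
  obtain ⟨u, v, hu, hv, hxu, hyv, huv⟩ := key
  exact ⟨u, v, TopologicalSpace.isOpen_generateFrom_of_mem hu,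
    TopologicalSpace.isOpen_generateFrom_of_mem hv, hxu, hyv, huv⟩

end NoTop

lemma gen_eq {d : X → X → ℝ} [ts : TopologicalSpace X]
    (htri : ∀ x y z : X, 0 < d x y → 0 < d y z → d x y + d y z ≤ d x z)
    (hax : LMSAxiom2 ts d)
    (hsep : ∀ x y : X, x ≠ y → ∃ z : X, d x z ≠ d y z ∨ d z x ≠ d z y)
    (hnb : NoBoundary d) :
    TopologicalSpace.generateFrom (SB d) = ts := by
  obtain ⟨hc, hcomp⟩ := hax
  have hle : ts ≤ TopologicalSpace.generateFrom (SB d) :=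
    le_generateFrom (isOpen_SB hc)
  refine le_antisymm ?_ hle
  rw [TopologicalSpace.le_def]
  intro U hU
  have key : ∀ x ∈ U, ∃ V, V ⊆ U ∧
      (TopologicalSpace.generateFrom (SB d)).IsOpen V ∧ x ∈ V := by
    intro x hx
    obtain ⟨p, q, ε, C, hε0, h1, h2, hC, hsub⟩ := compact_nbhd htri ⟨hc, hcomp⟩ hsep hnb x
    have hF : IsCompact (C \ U) := hC.diff hU
    have hF' : @IsCompact X (TopologicalSpace.generateFrom (SB d)) (C \ U) := by
      have := @IsCompact.image X X ts (TopologicalSpace.generateFrom (SB d)) _ id hF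
        (continuous_id_of_le hle)
      rwa [Set.image_id] at this
    have hFclosed : @IsClosed X (TopologicalSpace.generateFrom (SB d)) (C \ U) :=
      @IsCompact.isClosed X (TopologicalSpace.generateFrom (SB d)) (gen_t2 d hsep) _ hF'
    set O : Set X := {u | ((ε : EReal) < (d p u : EReal) ∧ (d p u : EReal) < (⊤ : EReal)) ∧
        ((ε : EReal) < (d u q : EReal) ∧ (d u q : EReal) < (⊤ : EReal))} with hO
    have hOmem : O ∈ SB d := ⟨p, q, (ε : EReal), ⊤, (ε : EReal), ⊤, rfl⟩
    have hOopen : (TopologicalSpace.generateFrom (SB d)).IsOpen O :=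
      TopologicalSpace.isOpen_generateFrom_of_mem hOmem
    have hOsub : O ⊆ C := by
      rintro u ⟨⟨hu1, -⟩, hu2, -⟩
      exact hsub ⟨by exact_mod_cast hu1, by exact_mod_cast hu2⟩
    refine ⟨O \ (C \ U), ?_, @IsOpen.sdiff X _ _ (TopologicalSpace.generateFrom (SB d))
      hOopen hFclosed, ?_, ?_⟩
    · rintro v ⟨hvO, hv⟩
      by_contra hvU
      exact hv ⟨hOsub hvO, hvU⟩
    · exact ⟨⟨by exact_mod_cast h1, EReal.coe_lt_top _⟩,
        by exact_mod_cast h2, EReal.coe_lt_top _⟩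
    · exact fun hmem => hmem.2 hx
  rw [@isOpen_iff_forall_mem_open X (TopologicalSpace.generateFrom (SB d)) U]
  intro x hx
  obtain ⟨V, hVsub, hVopen, hxV⟩ := key x hx
  exact ⟨V, hVsub, hVopen, hxV⟩

end LMSUnique

/-- Uniqueness and characterization of the topology of a Lorentzian metric space
with no chronological boundary: the topology is Hausdorff, locally compact,
unique among topologies satisfying axiom (ii), and the sets
`{q | a < d p q < b} ∩ {q | c < d q r < e}` (with extended-real bounds)
form a subbasis for it. -/
theorem lms_topology_unique_and_subbasis
    (T : TopologicalSpace X) (d : X → X → ℝ)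
    (h : IsLMS T d) (hnb : NoBoundary d) :
    letI := T
    T2Space X ∧ LocallyCompactSpace X ∧
    (∀ T' : TopologicalSpace X, LMSAxiom2 T' d → T' = T) ∧
    TopologicalSpace.generateFrom
      {S : Set X | ∃ (p r : X) (a b c e : EReal),
        S = {q : X | (a < (d p q : EReal) ∧ (d p q : EReal) < b) ∧
                     (c < (d q r : EReal) ∧ (d q r : EReal) < e)}} = T := by
  letI := T
  obtain ⟨hd0, htri, hax, hsep⟩ := h
  have hc : Continuous (fun p : X × X => d p.1 p.2) := hax.1
  have hT2 : T2Space X := LMSUnique.t2_of_sep hc hsep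
  have hW : WeaklyLocallyCompactSpace X := by
    refine ⟨fun x => ?_⟩
    obtain ⟨p, q, ε, C, hε0, h1, h2, hC, hsub⟩ :=
      LMSUnique.compact_nbhd htri hax hsep hnb x
    refine ⟨C, hC, mem_nhds_iff.mpr ⟨{u | ε < d p u ∧ ε < d u q}, hsub, ?_, h1, h2⟩⟩
    exact (isOpen_lt continuous_const (LMSUnique.cont_left hc p)).inter
      (isOpen_lt continuous_const (LMSUnique.cont_right hc q))
  have hLC : LocallyCompactSpace X := inferInstance
  have hgen : TopologicalSpace.generateFrom (LMSUnique.SB d) = T :=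
    LMSUnique.gen_eq htri hax hsep hnb
  refine ⟨hT2, hLC, fun T' hax' => ?_, hgen⟩
  have h' : TopologicalSpace.generateFrom (LMSUnique.SB d) = T' :=
    @LMSUnique.gen_eq X d T' htri hax' hsep hnb
  exact h'.symm.trans hgen
end

section
/- Let (X,d_X) and (Y,d_Y) be Lorentzian metric spaces with no chronological boundary, and let φ : X → Y be a bijective map such that d_Y(φ(x), φ(x')) = d_X(x, x') for all x, x' ∈ X. Then φ is a homeomorphism between the topologies of X and Y. -/
open Filter Topology Set

variable {X : Type*}

/-! ### Auxiliary: the topology of an LMS is determined by `d` -/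

/-- The "pointwise" topology on `X`: the initial topology of the family of functions
`d z ·` and `d · z`, `z : X`. -/
def pTop (d : X → X → ℝ) : TopologicalSpace X :=
  (⨅ z : X, TopologicalSpace.induced (fun x => d z x) inferInstance) ⊓
  (⨅ z : X, TopologicalSpace.induced (fun x => d x z) inferInstance)

lemma pTop_continuous_left (d : X → X → ℝ) (z : X) :
    Continuous[pTop d, inferInstance] fun x => d z x :=
  continuous_iff_le_induced.2 (le_trans inf_le_left (iInf_le _ z))

lemma pTop_continuous_right (d : X → X → ℝ) (z : X) :
    Continuous[pTop d, inferInstance] fun x => d x z :=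
  continuous_iff_le_induced.2 (le_trans inf_le_right (iInf_le _ z))

/-- In a Lorentzian metric space with no chronological boundary, the topology coincides
with the pointwise topology of the distance functions. -/

lemma isOpen_pre {t : TopologicalSpace X} {f : X → ℝ} (hf : Continuous[t, inferInstance] f)
    {s : Set ℝ} (hs : IsOpen s) : IsOpen[t] (f ⁻¹' s) :=
  hf.isOpen_preimage s hs

lemma isOpen_inter' {t : TopologicalSpace X} {s u : Set X}
    (hs : IsOpen[t] s) (hu : IsOpen[t] u) : IsOpen[t] (s ∩ u) :=
  IsOpen.inter hs hu

lemma cont_dist' {t : TopologicalSpace X} {f : X → ℝ} (hf : Continuous[t, inferInstance] f)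
    (c : ℝ) : Continuous[t, inferInstance] fun y => dist (f y) c :=
  Continuous.dist hf continuous_const

lemma mem_nhds' {t : TopologicalSpace X} {s : Set X} {x : X}
    (hs : IsOpen[t] s) (hx : x ∈ s) : s ∈ @nhds X t x :=
  IsOpen.mem_nhds hs hx

theorem lms_topology_eq (T : TopologicalSpace X) (d : X → X → ℝ)
    (h : IsLMS T d) (hnb : NoBoundary d) : T = pTop d := by
  obtain ⟨hnn, htri, hax2, hsep⟩ := h
  obtain ⟨hcont, hcomp⟩ := hax2
  letI := T
  refine le_antisymm (le_inf (le_iInf fun z => ?_) (le_iInf fun z => ?_)) ?_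
  · exact continuous_iff_le_induced.1 (hcont.comp (Continuous.prodMk_right z))
  · exact continuous_iff_le_induced.1 (hcont.comp (continuous_id.prodMk continuous_const))
  · -- the hard direction : pTop d ≤ T
    intro U hU
    rw [@isOpen_iff_mem_nhds X (pTop d) U]
    intro x hxU
    by_contra hmem
    set F : Filter X := @nhds X (pTop d) x ⊓ 𝓟 Uᶜ with hFdef
    have hFne : F.NeBot := by
      rw [neBot_iff]
      intro hbot
      exact hmem (Filter.mem_iff_inf_principal_compl.2 hbot)
    obtain ⟨⟨p, hpx⟩, ⟨q, hxq⟩⟩ := hnb x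
    obtain ⟨⟨a, hap⟩, -⟩ := hnb p
    have hpq : 0 < d p q := lt_of_lt_of_le (by linarith) (htri p x q hpx hxq)
    set ε : ℝ := d p x / 2 with hεdef
    have hεpos : 0 < ε := half_pos hpx
    set clI : Set X := closure {z : X | 0 < d a z ∧ 0 < d z q} with hclIdef
    have hpcl : p ∈ clI := subset_closure ⟨hap, hpq⟩
    have hK := hcomp a q ε hεpos
    set S : Set X := {y : X | ε ≤ d p y} ∩ clI with hSdef
    have hdpc : Continuous fun y => d p y := hcont.comp (Continuous.prodMk_right p)
    have hScl : IsClosed S := (isClosed_le continuous_const hdpc).inter isClosed_closure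
    have hSsub : S ⊆ Prod.snd '' ({pr : X × X | ε ≤ d pr.1 pr.2} ∩ (clI ×ˢ clI)) := by
      rintro y ⟨h1, h2⟩
      exact ⟨(p, y), ⟨h1, hpcl, h2⟩, rfl⟩
    have hScomp : IsCompact S :=
      (hK.image continuous_snd).of_isClosed_subset hScl hSsub
    have h1mem : {y : X | ε ≤ d p y} ∈ @nhds X (pTop d) x := by
      have ho : IsOpen[pTop d] {y : X | ε < d p y} :=
        isOpen_pre (pTop_continuous_left d p) isOpen_Ioi
      exact Filter.mem_of_superset (mem_nhds' ho (half_lt_self hpx))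
        (fun y (hy : ε < d p y) => le_of_lt hy)
    have h2mem : clI ∈ @nhds X (pTop d) x := by
      have ho : IsOpen[pTop d] {y : X | 0 < d p y ∧ 0 < d y q} := by
        have o1 : IsOpen[pTop d] {y : X | 0 < d p y} :=
          isOpen_pre (pTop_continuous_left d p) isOpen_Ioi
        have o2 : IsOpen[pTop d] {y : X | 0 < d y q} :=
          isOpen_pre (pTop_continuous_right d q) isOpen_Ioi
        exact isOpen_inter' o1 o2
      refine Filter.mem_of_superset (mem_nhds' ho ⟨hpx, hxq⟩) ?_
      rintro y ⟨hy1, hy2⟩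
      exact subset_closure ⟨lt_of_lt_of_le (by linarith) (htri a p y hap hy1), hy2⟩
    have hSF : S ∈ F := Filter.mem_inf_of_left (Filter.inter_mem h1mem h2mem)
    haveI := hFne
    obtain ⟨x', hx'S, hclus⟩ := hScomp (le_principal_iff.2 hSF)
    have key : ∀ C : Set X, IsClosed C → C ∈ F → x' ∈ C := by
      intro C hCcl hCF
      have hc : ClusterPt x' (𝓟 C) := hclus.mono (le_principal_iff.2 hCF)
      have := mem_closure_iff_clusterPt.2 hc
      rwa [hCcl.closure_eq] at this
    have hd1 : ∀ z, d z x' = d z x := by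
      intro z
      refine eq_of_forall_dist_le fun ε' hε' => ?_
      have hCcl : IsClosed {y : X | dist (d z y) (d z x) ≤ ε'} :=
        isClosed_le (Continuous.dist (hcont.comp (Continuous.prodMk_right z)) continuous_const)
          continuous_const
      have hCF : {y : X | dist (d z y) (d z x) ≤ ε'} ∈ F := by
        have hc : Continuous[pTop d, inferInstance] fun y => dist (d z y) (d z x) :=
          cont_dist' (pTop_continuous_left d z) (d z x)
        have ho : IsOpen[pTop d] {y : X | dist (d z y) (d z x) < ε'} :=
          isOpen_pre hc isOpen_Iio
        exact Filter.mem_inf_of_left (Filter.mem_of_superset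
          (mem_nhds' ho (by simpa using hε')) fun y hy => le_of_lt (Set.mem_setOf_eq ▸ hy))
      exact key _ hCcl hCF
    have hd2 : ∀ z, d x' z = d x z := by
      intro z
      refine eq_of_forall_dist_le fun ε' hε' => ?_
      have hCcl : IsClosed {y : X | dist (d y z) (d x z) ≤ ε'} :=
        isClosed_le (Continuous.dist (hcont.comp (continuous_id.prodMk continuous_const))
          continuous_const) continuous_const
      have hCF : {y : X | dist (d y z) (d x z) ≤ ε'} ∈ F := by
        have hc : Continuous[pTop d, inferInstance] fun y => dist (d y z) (d x z) :=
          cont_dist' (pTop_continuous_right d z) (d x z)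
        have ho : IsOpen[pTop d] {y : X | dist (d y z) (d x z) < ε'} :=
          isOpen_pre hc isOpen_Iio
        exact Filter.mem_inf_of_left (Filter.mem_of_superset
          (mem_nhds' ho (by simpa using hε')) fun y hy => le_of_lt (Set.mem_setOf_eq ▸ hy))
      exact key _ hCcl hCF
    have hx'U : x' ∈ Uᶜ :=
      key Uᶜ hU.isClosed_compl (Filter.mem_inf_of_right (Filter.mem_principal_self _))
    have hxx : x' = x := by
      by_contra hne
      rcases hsep x' x hne with ⟨z, hz | hz⟩
      · exact hz (hd2 z)
      · exact hz (hd1 z)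
    exact hx'U (hxx ▸ hxU)

/-- A distance-preserving surjection between LMSs (target without boundary) is continuous. -/
theorem lms_iso_continuous {Y : Type*} (TX : TopologicalSpace X) (TY : TopologicalSpace Y)
    (dX : X → X → ℝ) (dY : Y → Y → ℝ)
    (hX : IsLMS TX dX) (hY : IsLMS TY dY) (hnbY : NoBoundary dY)
    (φ : X → Y) (hsur : Function.Surjective φ)
    (hiso : ∀ x x' : X, dY (φ x) (φ x') = dX x x') :
    Continuous[TX, TY] φ := by
  obtain ⟨-, -, hax2, -⟩ := hX
  obtain ⟨hcontX, -⟩ := hax2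
  rw [lms_topology_eq TY dY hY hnbY]
  unfold pTop
  refine continuous_inf_rng.mpr ⟨continuous_iInf_rng.mpr fun w => ?_,
    continuous_iInf_rng.mpr fun w => ?_⟩
  · refine continuous_induced_rng.mpr ?_
    obtain ⟨u, rfl⟩ := hsur w
    have heq : ((fun y => dY (φ u) y) ∘ φ) = fun x => dX u x := funext fun x => hiso u x
    rw [heq]
    exact hcontX.comp (Continuous.prodMk_right u)
  · refine continuous_induced_rng.mpr ?_
    obtain ⟨u, rfl⟩ := hsur w
    have heq : ((fun y => dY y (φ u)) ∘ φ) = fun x => dX x u := funext fun x => hiso x u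
    rw [heq]
    exact hcontX.comp (continuous_id.prodMk continuous_const)

/-- A bijective distance-preserving map between Lorentzian metric spaces without
chronological boundary is a homeomorphism. -/
theorem lms_isometry_is_homeomorphism
    {Y : Type*} (TX : TopologicalSpace X) (TY : TopologicalSpace Y)
    (dX : X → X → ℝ) (dY : Y → Y → ℝ)
    (hX : IsLMS TX dX) (hY : IsLMS TY dY)
    (hnbX : NoBoundary dX) (hnbY : NoBoundary dY)
    (φ : X → Y) (hbij : Function.Bijective φ)
    (hiso : ∀ x x' : X, dY (φ x) (φ x') = dX x x') :
    letI := TX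
    letI := TY
    Continuous φ ∧ IsOpenMap φ := by
  show @Continuous X Y TX TY φ ∧ @IsOpenMap X Y TX TY φ
  have hcphi : @Continuous X Y TX TY φ :=
    lms_iso_continuous TX TY dX dY hX hY hnbY φ hbij.surjective hiso
  set e := Equiv.ofBijective φ hbij with hedef
  have hisoinv : ∀ y y' : Y, dX (e.symm y) (e.symm y') = dY y y' := by
    intro y y'
    have h := hiso (e.symm y) (e.symm y')
    have h1 : φ (e.symm y) = y := e.apply_symm_apply y
    have h2 : φ (e.symm y') = y' := e.apply_symm_apply y'
    rw [h1, h2] at h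
    exact h.symm
  have hcpsi : @Continuous Y X TY TX e.symm :=
    lms_iso_continuous TY TX dY dX hY hX hnbX e.symm e.symm.surjective hisoinv
  refine ⟨hcphi, ?_⟩
  intro U hU
  have himg : φ '' U = e.symm ⁻¹' U := by
    ext y
    constructor
    · rintro ⟨x, hx, rfl⟩
      have : e.symm (φ x) = x := e.symm_apply_apply x
      simpa [this] using hx
    · intro hy
      exact ⟨e.symm y, hy, e.apply_symm_apply y⟩
  rw [himg]
  exact @IsOpen.preimage Y X TY TX e.symm hcpsi U hU
end

section
/- Let (X,d) be a countably generated Lorentzian prelength space (with no chronological boundary). Let γ : [0,b) → X with b < ∞ be an isocausal curve possessing a future endpoint p (i.e. γ(t) → p as t → b⁻). Then γ is the restriction of a future inextendible isocausal curve: there exist c ∈ (b, ∞] and an isocausal curve γ̃ : [0,c) → X with no future endpoint such that γ̃(t) = γ(t) for all t ∈ [0,b). -/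
open Filter Topology Set

variable {X : Type*}

/-- Prelength space: any two chronologically related points are connected by an
isocausal curve. -/
def IsPrelength (T : TopologicalSpace X) (d : X → X → ℝ) : Prop :=
  ∀ x y : X, 0 < d x y → ∃ a b : ℝ, a < b ∧ ∃ σ : ℝ → X,
    IsIsocausalOn T d σ (Set.Icc a b) ∧ σ a = x ∧ σ b = y


section Aux

variable {d : X → X → ℝ}

lemma jrel_refl (x : X) : Jrel d x x := fun _ => ⟨le_rfl, le_rfl⟩

lemma jrel_trans {x y z : X} (h1 : Jrel d x y) (h2 : Jrel d y z) : Jrel d x z :=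
  fun q => ⟨(h1 q).1.trans (h2 q).1, (h2 q).2.trans (h1 q).2⟩

variable (h0 : ∀ x y : X, 0 ≤ d x y)
  (htri : ∀ x y z : X, 0 < d x y → 0 < d y z → d x y + d y z ≤ d x z)
  (hsep : ∀ x y : X, x ≠ y → ∃ z : X, d x z ≠ d y z ∨ d z x ≠ d z y)

include h0 htri in
lemma d_self_zero (x : X) : d x x = 0 := by
  by_contra hne
  have hpos : 0 < d x x := lt_of_le_of_ne (h0 x x) (Ne.symm hne)
  have := htri x x x hpos hpos
  linarith

include h0 htri in
lemma jrel_of_pos {x y : X} (hxy : 0 < d x y) : Jrel d x y := by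
  intro q
  constructor
  · rcases (h0 q x).lt_or_eq with hq | hq
    · have := htri q x y hq hxy; linarith
    · rw [← hq]; exact h0 q y
  · rcases (h0 y q).lt_or_eq with hq | hq
    · have := htri x y q hxy hq; linarith
    · rw [← hq]; exact h0 x q

include h0 htri in
lemma causalLt_of_pos {x y : X} (hxy : 0 < d x y) : CausalLt d x y := by
  refine ⟨jrel_of_pos h0 htri hxy, fun he => ?_⟩
  rw [he] at hxy
  rw [d_self_zero h0 htri y] at hxy
  exact lt_irrefl _ hxy

include hsep in
lemma jrel_antisymm {x y : X} (h1 : Jrel d x y) (h2 : Jrel d y x) : x = y := by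
  by_contra hne
  obtain ⟨z, hz⟩ := hsep x y hne
  rcases hz with hz | hz
  · exact hz (le_antisymm (h2 z).2 (h1 z).2)
  · exact hz (le_antisymm (h1 z).1 (h2 z).1)

include hsep in
lemma causalLt_trans_jrel {x y z : X} (h1 : CausalLt d x y) (h2 : Jrel d y z) :
    CausalLt d x z := by
  refine ⟨jrel_trans h1.1 h2, fun he => ?_⟩
  subst he
  exact h1.2 (jrel_antisymm hsep h1.1 h2)

include hsep in
lemma jrel_trans_causalLt {x y z : X} (h1 : Jrel d x y) (h2 : CausalLt d y z) :
    CausalLt d x z := by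
  refine ⟨jrel_trans h1 h2.1, fun he => ?_⟩
  subst he
  exact h2.2 (jrel_antisymm hsep h2.1 h1)

include hsep in
lemma causalLt_trans {x y z : X} (h1 : CausalLt d x y) (h2 : CausalLt d y z) :
    CausalLt d x z :=
  causalLt_trans_jrel hsep h1 h2.1

variable [T : TopologicalSpace X]

lemma jrel_of_tendsto (hcont : Continuous fun q : X × X => d q.1 q.2)
    {ι : Type*} {l : Filter ι} [l.NeBot] {f : ι → X} {x p : X}
    (hmem : ∀ᶠ i in l, Jrel d x (f i)) (hp : Tendsto f l (𝓝 p)) : Jrel d x p := by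
  intro r
  have hdr : Continuous fun z : X => d r z := hcont.comp (continuous_const.prodMk continuous_id)
  have hdl : Continuous fun z : X => d z r := hcont.comp (continuous_id.prodMk continuous_const)
  constructor
  · exact ge_of_tendsto ((hdr.tendsto p).comp hp) (hmem.mono fun i hi => (hi r).1)
  · exact le_of_tendsto ((hdl.tendsto p).comp hp) (hmem.mono fun i hi => (hi r).2)

end Aux


section Glue
variable {d : X → X → ℝ} [T : TopologicalSpace X]

lemma iso_reparam {σ : ℝ → X} {a₁ b₁ u v : ℝ} (hab : a₁ < b₁) (huv : u < v)
    (hσ : IsIsocausalOn T d σ (Icc a₁ b₁)) :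
    ∃ σ' : ℝ → X, IsIsocausalOn T d σ' (Icc u v) ∧ σ' u = σ a₁ ∧ σ' v = σ b₁ := by
  set k : ℝ := (b₁ - a₁) / (v - u) with hk
  have hkpos : 0 < k := div_pos (by linarith) (by linarith)
  set L : ℝ → ℝ := fun t => a₁ + (t - u) * k with hL
  have hLu : L u = a₁ := by simp [hL]
  have hvu : v - u ≠ 0 := by intro hh; rw [sub_eq_zero] at hh; exact absurd hh (ne_of_gt huv)
  have hLv : L v = b₁ := by
    simp only [hL, hk]
    field_simp
    ring
  have hLmono : ∀ s t : ℝ, s < t → L s < L t := by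
    intro s t hst
    simp only [hL]
    have : (s - u) * k < (t - u) * k := by
      apply mul_lt_mul_of_pos_right _ hkpos
      linarith
    linarith
  have hLmonole : ∀ s t : ℝ, s ≤ t → L s ≤ L t := by
    intro s t hst
    rcases hst.lt_or_eq with h | h
    · exact (hLmono s t h).le
    · rw [h]
  have hLcont : Continuous L := by continuity
  have hmaps : MapsTo L (Icc u v) (Icc a₁ b₁) := by
    intro t ht
    constructor
    · rw [← hLu]; exact hLmonole _ _ ht.1
    · rw [← hLv]; exact hLmonole _ _ ht.2
  refine ⟨σ ∘ L, ⟨?_, ?_⟩, by simp [hLu], by simp [hLv]⟩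
  · exact hσ.1.comp hLcont.continuousOn hmaps
  · intro s hs t ht hst
    exact hσ.2 (L s) (hmaps hs) (L t) (hmaps ht) (hLmono s t hst)

lemma iso_glue
    (hsep : ∀ x y : X, x ≠ y → ∃ z : X, d x z ≠ d y z ∨ d z x ≠ d z y)
    {σ₁ σ₂ : ℝ → X} {a m c : ℝ} (ham : a < m) (hmc : m < c)
    (h1 : IsIsocausalOn T d σ₁ (Icc a m)) (h2 : IsIsocausalOn T d σ₂ (Icc m c))
    (hag : σ₁ m = σ₂ m) :
    ∃ σ : ℝ → X, IsIsocausalOn T d σ (Icc a c) ∧ σ a = σ₁ a ∧ σ c = σ₂ c := by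
  set σ : ℝ → X := fun t => if t ≤ m then σ₁ t else σ₂ t with hσ
  have heq1 : ∀ t ∈ Icc a m, σ t = σ₁ t := fun t ht => if_pos ht.2
  have heq2 : ∀ t ∈ Icc m c, σ t = σ₂ t := by
    intro t ht
    rcases ht.1.lt_or_eq with h | h
    · exact (if_neg (not_le.mpr h)).trans rfl
    · simp [hσ, ← h, hag]
  refine ⟨σ, ⟨?_, ?_⟩, heq1 a ⟨le_rfl, ham.le⟩, heq2 c ⟨hmc.le, le_rfl⟩⟩
  · -- continuity
    intro x hx
    have hc1 : ContinuousWithinAt σ (Icc a m) x := by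
      rcases le_or_gt x m with hxm | hxm
      · rcases le_or_gt a x with hax | hax
        · exact ((h1.1 x ⟨hax, hxm⟩).congr heq1 (heq1 x ⟨hax, hxm⟩))
        · exact continuousWithinAt_of_notMem_closure (by
            rw [closure_Icc]
            exact fun hmem => absurd hmem.1 (not_le.mpr hax))
      · exact continuousWithinAt_of_notMem_closure (by
          rw [closure_Icc]
          exact fun hmem => absurd hmem.2 (not_le.mpr hxm))
    have hc2 : ContinuousWithinAt σ (Icc m c) x := by
      rcases le_or_gt m x with hmx | hmx
      · exact ((h2.1 x ⟨hmx, hx.2⟩).congr heq2 (heq2 x ⟨hmx, hx.2⟩))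
      · exact continuousWithinAt_of_notMem_closure (by
          rw [closure_Icc]
          exact fun hmem => absurd hmem.1 (not_le.mpr hmx))
    exact (hc1.union hc2).mono (by
      intro y hy
      rcases le_or_gt y m with h | h
      · exact Or.inl ⟨hy.1, h⟩
      · exact Or.inr ⟨h.le, hy.2⟩)
  · -- causality
    intro s hs t ht hst
    rcases le_or_gt t m with htm | htm
    · rw [heq1 s ⟨hs.1, hst.le.trans htm⟩, heq1 t ⟨hs.1.trans hst.le, htm⟩]
      exact h1.2 s ⟨hs.1, hst.le.trans htm⟩ t ⟨hs.1.trans hst.le, htm⟩ hst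
    · rcases le_or_gt s m with hsm | hsm
      · rw [heq1 s ⟨hs.1, hsm⟩, heq2 t ⟨htm.le, ht.2⟩]
        rcases hsm.lt_or_eq with hsm' | hsm'
        · have hA : CausalLt d (σ₁ s) (σ₁ m) := h1.2 s ⟨hs.1, hsm⟩ m ⟨ham.le, le_rfl⟩ hsm'
          have hB : CausalLt d (σ₂ m) (σ₂ t) := h2.2 m ⟨le_rfl, hmc.le⟩ t ⟨htm.le, ht.2⟩ htm
          rw [hag] at hA
          exact causalLt_trans hsep hA hB
        · rw [hsm', hag]
          exact h2.2 m ⟨le_rfl, hmc.le⟩ t ⟨htm.le, ht.2⟩ htm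
      · rw [heq2 s ⟨hsm.le, hs.2⟩, heq2 t ⟨htm.le, ht.2⟩]
        exact h2.2 s ⟨hsm.le, hs.2⟩ t ⟨htm.le, ht.2⟩ hst

lemma connect (hpre : IsPrelength T d) {x y : X} (hxy : 0 < d x y) {u v : ℝ} (huv : u < v) :
    ∃ σ : ℝ → X, IsIsocausalOn T d σ (Icc u v) ∧ σ u = x ∧ σ v = y := by
  obtain ⟨a, b, hab, σ₀, hσ₀, ha, hb⟩ := hpre x y hxy
  obtain ⟨σ', hσ', hu, hv⟩ := iso_reparam hab huv hσ₀
  exact ⟨σ', hσ', by rw [hu, ha], by rw [hv, hb]⟩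

end Glue


/-- In a countably generated Lorentzian prelength space, every isocausal curve
`γ : [0,b) → X`, `b < ∞`, with a future endpoint is the restriction of a future
inextendible isocausal curve `γ' : [0,c) → X` with `c ∈ (b, ∞]`. -/
theorem lms_extension_to_inextendible
    (T : TopologicalSpace X) (d : X → X → ℝ)
    (h : IsLMS T d) (hcg : CountablyGenerated d) (hpre : IsPrelength T d)
    (b : ℝ) (hb : 0 < b) (γ : ℝ → X)
    (hiso : IsIsocausalOn T d γ (Set.Ico 0 b))
    (p : X) (hp : letI := T; Filter.Tendsto γ (𝓝[<] b) (𝓝 p)) :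
    ∃ (c : EReal) (γ' : ℝ → X), (b : EReal) < c ∧
      IsIsocausalOn T d γ' {t : ℝ | 0 ≤ t ∧ (t : EReal) < c} ∧
      (letI := T;
        ¬∃ q : X, Filter.Tendsto γ'
          (Filter.comap (fun t : ℝ => (t : EReal)) (𝓝[<] c)) (𝓝 q)) ∧
      ∀ t ∈ Set.Ico (0 : ℝ) b, γ' t = γ t := by
  letI := T
  obtain ⟨h0, htri, ⟨hcont, -⟩, hsep⟩ := h
  obtain ⟨G, hGc, hG⟩ := hcg
  have hGne : G.Nonempty := by
    obtain ⟨⟨q, hq, -⟩, -⟩ := hG p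
    exact ⟨q, hq⟩
  obtain ⟨f, hfG⟩ := hGc.exists_eq_range hGne
  -- one extension step
  have step : ∀ x : X, ∀ n : ℕ, ∃ y : X, ∃ σ : ℝ → X,
      IsIsocausalOn T d σ (Icc (b + n) (b + n + 1)) ∧ σ (b + n) = x ∧ σ (b + n + 1) = y ∧
      (0 < d x (f n) → 0 < d (f n) y) := by
    intro x n
    have hn1 : (b:ℝ) + n < b + n + 1/2 := by linarith
    have hn2 : (b:ℝ) + n + 1/2 < b + n + 1 := by linarith
    by_cases hxg : 0 < d x (f n)
    · obtain ⟨-, r, -, hr⟩ := hG (f n)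
      obtain ⟨σ₁, hσ₁, h1u, h1v⟩ := connect hpre hxg hn1
      obtain ⟨σ₂, hσ₂, h2u, h2v⟩ := connect hpre hr hn2
      obtain ⟨σ, hσ, hu, hv⟩ := iso_glue hsep hn1 hn2 hσ₁ hσ₂ (by rw [h1v, h2u])
      exact ⟨r, σ, hσ, by rw [hu, h1u], by rw [hv, h2v], fun _ => hr⟩
    · obtain ⟨-, w, -, hw⟩ := hG x
      obtain ⟨σ, hσ, hu, hv⟩ := connect hpre hw (show (b:ℝ) + n < b + n + 1 by linarith)
      exact ⟨w, σ, hσ, hu, hv, fun hc => absurd hc hxg⟩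
  choose Y S hIso hA hB hImp using step
  set pts : ℕ → X := fun n => Nat.rec p (fun k q => Y q k) n with hpts
  have hpts0 : pts 0 = p := rfl
  have hptsS : ∀ n, pts (n + 1) = Y (pts n) n := fun n => rfl
  set crv : ℕ → ℝ → X := fun n => S (pts n) n with hcrv
  have hIso' : ∀ n : ℕ, IsIsocausalOn T d (crv n) (Icc (b + n) (b + n + 1)) :=
    fun n => hIso (pts n) n
  have hA' : ∀ n : ℕ, crv n (b + n) = pts n := fun n => hA (pts n) n
  have hB' : ∀ n : ℕ, crv n (b + n + 1) = pts (n + 1) :=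
    fun n => (hB (pts n) n).trans (hptsS n).symm
  have hImp' : ∀ n : ℕ, 0 < d (pts n) (f n) → 0 < d (f n) (pts (n + 1)) := by
    intro n hn
    rw [hptsS n]
    exact hImp (pts n) n hn
  set γ' : ℝ → X := fun t => if t < b then γ t else crv ⌊t - b⌋₊ t with hγ'
  -- key identifications
  have keyB : ∀ s : ℝ, s < b → γ' s = γ s := fun s hs => if_pos hs
  have keyA : ∀ (n : ℕ) (s : ℝ), b + n ≤ s → s ≤ b + n + 1 → γ' s = crv n s := by
    intro n s h1 h2
    have hnn : (0:ℝ) ≤ (n:ℝ) := Nat.cast_nonneg n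
    have hsb : ¬ s < b := not_lt.mpr (by linarith)
    have hcast : (b:ℝ) + ((n+1:ℕ):ℝ) = b + n + 1 := by push_cast; ring
    rcases h2.lt_or_eq with h2' | h2'
    · have hfl : ⌊s - b⌋₊ = n := by
        rw [Nat.floor_eq_iff (by linarith)]
        constructor
        · linarith
        · linarith
      simp only [hγ']
      rw [if_neg hsb, hfl]
    · have hfl : ⌊s - b⌋₊ = n + 1 := by
        rw [Nat.floor_eq_iff (by linarith)]
        push_cast
        constructor
        · linarith
        · linarith
      simp only [hγ']
      rw [if_neg hsb, hfl, h2', hB' n, ← hcast, hA' (n+1)]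
  have hγ'n : ∀ n : ℕ, γ' (b + n) = pts n := by
    intro n
    rw [keyA n (b + n) le_rfl (by linarith), hA' n]
  have hγ'b : γ' b = p := by
    have h1 : (b:ℝ) + ((0:ℕ):ℝ) = b := by push_cast; ring
    have := hγ'n 0
    rw [h1] at this
    rw [this, hpts0]
  -- causality facts
  have hF3 : ∀ n : ℕ, CausalLt d (pts n) (pts (n + 1)) := by
    intro n
    rw [← hA' n, ← hB' n]
    exact (hIso' n).2 (b + n) ⟨le_rfl, by linarith⟩ (b + n + 1) ⟨by linarith, le_rfl⟩
      (by linarith)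
  have hF4 : ∀ n m : ℕ, n ≤ m → Jrel d (pts n) (pts m) := by
    intro n m hnm
    induction m, hnm using Nat.le_induction with
    | base => exact jrel_refl _
    | succ m hm ih => exact jrel_trans ih (hF3 m).1
  have hD : ∀ (n : ℕ) (t : ℝ), b + n ≤ t → t ≤ b + n + 1 → Jrel d (pts n) (γ' t) := by
    intro n t h1 h2
    rw [keyA n t h1 h2, ← hA' n]
    rcases h1.lt_or_eq with h1' | h1'
    · exact ((hIso' n).2 (b + n) ⟨le_rfl, by linarith⟩ t ⟨h1, h2⟩ h1').1
    · rw [← h1']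
      exact jrel_refl _
  have hC : ∀ (n : ℕ) (s : ℝ), b ≤ s → s < b + n → CausalLt d (γ' s) (pts n) := by
    intro n
    induction n with
    | zero =>
      intro s h1 h2
      exfalso
      simp only [Nat.cast_zero, add_zero] at h2
      linarith
    | succ n ih =>
      intro s h1 h2
      have hcast : (b:ℝ) + ((n+1:ℕ):ℝ) = b + n + 1 := by push_cast; ring
      rw [hcast] at h2
      rcases lt_or_ge s (b + n) with hcase | hcase
      · exact causalLt_trans hsep (ih s h1 hcase) (hF3 n)
      · rw [keyA n s hcase (by linarith), ← hB' n]
        exact (hIso' n).2 s ⟨hcase, by linarith⟩ (b + n + 1) ⟨by linarith, le_rfl⟩ h2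
  have hE : ∀ t : ℝ, b ≤ t → Jrel d (pts 0) (γ' t) := by
    intro t ht
    obtain ⟨n, hn1, hn2⟩ : ∃ n : ℕ, (n:ℝ) ≤ t - b ∧ t - b < (n:ℝ) + 1 :=
      ⟨⌊t - b⌋₊, Nat.floor_le (by linarith), Nat.lt_floor_add_one _⟩
    exact jrel_trans (hF4 0 n (Nat.zero_le n)) (hD n t (by linarith) (by linarith))
  -- endpoint relation for the original curve
  have hF1 : ∀ s : ℝ, 0 ≤ s → s < b → CausalLt d (γ s) p := by
    intro s h0s hsb
    have hJ : ∀ u : ℝ, s ≤ u → u < b → Jrel d (γ u) p := by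
      intro u hsu hub
      refine jrel_of_tendsto hcont (l := 𝓝[<] b) ?_ hp
      filter_upwards [Ioo_mem_nhdsLT hub] with t ht
      exact (hiso.2 u ⟨h0s.trans hsu, hub⟩ t ⟨le_trans (h0s.trans hsu) ht.1.le, ht.2⟩ ht.1).1
    refine ⟨hJ s le_rfl hsb, fun he => ?_⟩
    set s' := (s + b) / 2 with hs'
    have hs'1 : s < s' := by rw [hs']; linarith
    have hs'2 : s' < b := by rw [hs']; linarith
    have hlt : CausalLt d (γ s) (γ s') :=
      hiso.2 s ⟨h0s, hsb⟩ s' ⟨by linarith, hs'2⟩ hs'1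
    have h1 := hJ s' hs'1.le hs'2
    rw [← he] at h1
    exact hlt.2 (jrel_antisymm hsep hlt.1 h1)
  have hsetEq : {t : ℝ | 0 ≤ t ∧ (t : EReal) < (⊤ : EReal)} = Ici (0:ℝ) := by
    ext t
    simp [EReal.coe_lt_top]
  refine ⟨⊤, γ', EReal.coe_lt_top b, ?_, ?_, fun t ht => keyB t ht.2⟩
  · rw [hsetEq]
    constructor
    · -- continuity
      intro t ht
      simp only [mem_Ici] at ht
      rcases lt_trichotomy t b with htb | htb | htb
      · have hc : ContinuousWithinAt γ' (Ico 0 b) t :=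
          (hiso.1 t ⟨ht, htb⟩).congr (fun y hy => keyB y hy.2) (keyB t htb)
        refine hc.mono_of_mem_nhdsWithin ?_
        rw [← Ici_inter_Iio]
        exact inter_mem_nhdsWithin _ (Iio_mem_nhds htb)
      · subst htb
        have h1 : ContinuousWithinAt γ' (Ico 0 t) t := by
          unfold ContinuousWithinAt
          rw [hγ'b]
          refine (hp.mono_left (nhdsWithin_mono t Ico_subset_Iio_self)).congr' ?_
          filter_upwards [self_mem_nhdsWithin] with y hy
          exact (keyB y hy.2).symm
        have hcast0 : (t:ℝ) + ((0:ℕ):ℝ) = t := by push_cast; ring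
        have h2 : ContinuousWithinAt γ' (Icc t (t + 1)) t := by
          have hcc : ContinuousWithinAt (crv 0) (Icc t (t + 1)) t := by
            have := (hIso' 0).1 t ⟨by rw [hcast0], by rw [hcast0]; linarith⟩
            rw [hcast0] at this
            exact this
          refine hcc.congr (fun y hy => ?_) ?_
          · exact keyA 0 y (by rw [hcast0]; exact hy.1) (by rw [hcast0]; exact hy.2)
          · exact keyA 0 t (by rw [hcast0]) (by rw [hcast0]; linarith)
        refine (h1.union h2).mono_of_mem_nhdsWithin ?_
        refine mem_of_superset (inter_mem_nhdsWithin (Ici 0)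
          (Iio_mem_nhds (show t < t + 1 by linarith))) ?_
        rintro y ⟨hy0, hy1⟩
        rcases lt_or_ge y t with hcase | hcase
        · exact Or.inl ⟨hy0, hcase⟩
        · exact Or.inr ⟨hcase, le_of_lt hy1⟩
      · obtain ⟨n, hn1, hn2⟩ : ∃ n : ℕ, (n:ℝ) ≤ t - b ∧ t - b < (n:ℝ) + 1 :=
          ⟨⌊t - b⌋₊, Nat.floor_le (by linarith), Nat.lt_floor_add_one _⟩
        rcases lt_or_eq_of_le (show b + (n:ℝ) ≤ t by linarith) with hlt | heq
        · have hcc : ContinuousWithinAt (crv n) (Icc (b + n) (b + n + 1)) t :=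
            (hIso' n).1 t ⟨by linarith, by linarith⟩
          have h' : ContinuousWithinAt γ' (Icc (b + n) (b + n + 1)) t :=
            hcc.congr (fun y hy => keyA n y hy.1 hy.2) (keyA n t (by linarith) (by linarith))
          refine h'.mono_of_mem_nhdsWithin ?_
          refine mem_of_superset (inter_mem_nhdsWithin (Ici 0)
            (Ioo_mem_nhds hlt (show t < b + n + 1 by linarith))) ?_
          rintro y ⟨-, hy⟩
          exact ⟨hy.1.le, hy.2.le⟩
        · -- t = b + n, a junction point with n ≥ 1
          have hn0 : n ≠ 0 := by
            intro hh
            rw [hh] at heq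
            simp only [Nat.cast_zero, add_zero] at heq
            linarith
          obtain ⟨m, rfl⟩ : ∃ m, n = m + 1 := ⟨n - 1, (Nat.succ_pred_eq_of_pos
            (Nat.pos_of_ne_zero hn0)).symm⟩
          have hcast : (b:ℝ) + ((m+1:ℕ):ℝ) = b + m + 1 := by push_cast; ring
          have ht_eq : t = b + (m:ℝ) + 1 := by rw [← heq, hcast]
          have h1 : ContinuousWithinAt γ' (Icc (b + m) (b + m + 1)) t := by
            have hcc : ContinuousWithinAt (crv m) (Icc (b + m) (b + m + 1)) t :=
              (hIso' m).1 t ⟨by rw [ht_eq]; linarith, le_of_eq ht_eq⟩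
            exact hcc.congr (fun y hy => keyA m y hy.1 hy.2)
              (keyA m t (by rw [ht_eq]; linarith) (le_of_eq ht_eq))
          have h2 : ContinuousWithinAt γ' (Icc (b + ((m+1:ℕ):ℝ)) (b + ((m+1:ℕ):ℝ) + 1)) t := by
            have hcc : ContinuousWithinAt (crv (m+1))
                (Icc (b + ((m+1:ℕ):ℝ)) (b + ((m+1:ℕ):ℝ) + 1)) t :=
              (hIso' (m+1)).1 t ⟨le_of_eq heq, by rw [← heq]; linarith⟩
            exact hcc.congr (fun y hy => keyA (m+1) y hy.1 hy.2)
              (keyA (m+1) t (le_of_eq heq) (by rw [← heq]; linarith))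
          refine (h1.union h2).mono_of_mem_nhdsWithin ?_
          refine mem_of_superset (inter_mem_nhdsWithin (Ici 0)
            (Ioo_mem_nhds (show b + (m:ℝ) < t by rw [ht_eq]; linarith)
              (show t < b + ((m+1:ℕ):ℝ) + 1 by rw [hcast, ht_eq]; linarith))) ?_
          rintro y ⟨-, hy⟩
          rcases le_or_gt y (b + (m:ℝ) + 1) with hcase | hcase
          · exact Or.inl ⟨hy.1.le, hcase⟩
          · refine Or.inr ⟨by rw [hcast]; exact hcase.le, ?_⟩
            exact hy.2.le
    · -- causality
      intro s hs t ht hst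
      simp only [mem_Ici] at hs ht
      rcases lt_or_ge t b with htb | htb
      · rw [keyB s (hst.trans htb), keyB t htb]
        exact hiso.2 s ⟨hs, hst.trans htb⟩ t ⟨le_trans hs hst.le, htb⟩ hst
      · rcases lt_or_ge s b with hsb | hsb
        · rw [keyB s hsb]
          have h1 : CausalLt d (γ s) (pts 0) := by rw [hpts0]; exact hF1 s hs hsb
          exact causalLt_trans_jrel hsep h1 (hE t htb)
        · obtain ⟨n, hn1, hn2⟩ : ∃ n : ℕ, (n:ℝ) ≤ t - b ∧ t - b < (n:ℝ) + 1 :=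
            ⟨⌊t - b⌋₊, Nat.floor_le (by linarith), Nat.lt_floor_add_one _⟩
          rcases le_or_gt (b + (n:ℝ)) s with hsn | hsn
          · rw [keyA n s hsn (by linarith), keyA n t (by linarith) (by linarith)]
            exact (hIso' n).2 s ⟨hsn, by linarith⟩ t ⟨by linarith, by linarith⟩ hst
          · exact causalLt_trans_jrel hsep (hC n s hsb hsn) (hD n t (by linarith) (by linarith))
  · -- inextendibility
    rintro ⟨q, hq⟩
    have hnat : Tendsto (fun n : ℕ => b + (n:ℝ)) atTop atTop :=
      tendsto_atTop_add_const_left _ b tendsto_natCast_atTop_atTop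
    have hseq : Tendsto (fun n : ℕ => ((b + (n:ℝ) : ℝ) : EReal)) atTop (𝓝[<] (⊤ : EReal)) := by
      apply tendsto_nhdsWithin_of_tendsto_nhds_of_eventually_within
      · rw [EReal.tendsto_nhds_top_iff_real]
        intro x
        filter_upwards [hnat.eventually_gt_atTop x] with n hn
        exact EReal.coe_lt_coe_iff.mpr hn
      · exact Eventually.of_forall fun n => EReal.coe_lt_top _
    have hcomp : Tendsto (fun n : ℕ => b + (n:ℝ))
        atTop (Filter.comap (fun t : ℝ => (t : EReal)) (𝓝[<] (⊤ : EReal))) := by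
      rw [tendsto_comap_iff]
      exact hseq
    have hq' : Tendsto (fun n : ℕ => γ' (b + n)) atTop (𝓝 q) := hq.comp hcomp
    have hqpts : Tendsto pts atTop (𝓝 q) := hq'.congr fun n => hγ'n n
    have hJq : ∀ n : ℕ, Jrel d (pts n) q := by
      intro n
      refine jrel_of_tendsto hcont (l := atTop) ?_ hqpts
      filter_upwards [eventually_ge_atTop n] with m hm
      exact hF4 n m hm
    obtain ⟨-, w, hwG, hw⟩ := hG q
    rw [hfG] at hwG
    obtain ⟨k, rfl⟩ := hwG
    have h1 : 0 < d (pts k) (f k) := lt_of_lt_of_le hw (hJq k (f k)).2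
    have h2 : 0 < d (f k) (pts (k + 1)) := hImp' k h1
    have h3 : 0 < d (f k) q := lt_of_lt_of_le h2 (hJq (k + 1) (f k)).1
    have h4 := htri q (f k) q hw h3
    have h5 : d q q = 0 := d_self_zero h0 htri q
    linarith
end

section
/- If (X,d) is a countably generated Lorentzian metric space, then its topology is σ-compact, second-countable, and Polish (i.e. separable and completely metrizable). -/
open Filter Topology Set

variable {X : Type*}

private lemma lms_t2 [TopologicalSpace X] {d : X → X → ℝ}
    (hcont : Continuous fun p : X × X => d p.1 p.2)
    (hdist : ∀ x y : X, x ≠ y → ∃ z : X, d x z ≠ d y z ∨ d z x ≠ d z y) : T2Space X := by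
  constructor
  intro x y hxy
  obtain ⟨z, hz⟩ := hdist x y hxy
  have h1 : Continuous fun w : X => d w z :=
    hcont.comp (continuous_id.prodMk continuous_const)
  have h2 : Continuous fun w : X => d z w :=
    hcont.comp (continuous_const.prodMk continuous_id)
  rcases hz with hz | hz
  · obtain ⟨u, v, hu, hv, hxu, hyv, huv⟩ := t2_separation hz
    exact ⟨_, _, hu.preimage h1, hv.preimage h1, hxu, hyv, huv.preimage _⟩
  · obtain ⟨u, v, hu, hv, hxu, hyv, huv⟩ := t2_separation hz
    exact ⟨_, _, hu.preimage h2, hv.preimage h2, hxu, hyv, huv.preimage _⟩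

private lemma lms_exists_compact [TopologicalSpace X] [T1Space X] {d : X → X → ℝ}
    (_hpos : ∀ x y : X, 0 ≤ d x y)
    (htri : ∀ x y z : X, 0 < d x y → 0 < d y z → d x y + d y z ≤ d x z)
    (hcomp : ∀ x y : X, ∀ ε : ℝ, 0 < ε →
      IsCompact ({p : X × X | ε ≤ d p.1 p.2} ∩
        (closure {z : X | 0 < d x z ∧ 0 < d z y} ×ˢ closure {z : X | 0 < d x z ∧ 0 < d z y})))
    (hnb : ∀ x : X, (∃ p, 0 < d p x) ∧ (∃ q, 0 < d x q)) (p₁ q₁ : X) :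
    ∃ K : Set X, IsCompact K ∧ {z : X | 0 < d p₁ z ∧ 0 < d z q₁} ⊆ K := by
  obtain ⟨p₂, hp₂⟩ := (hnb p₁).1
  obtain ⟨p₃, hp₃⟩ := (hnb p₂).1
  obtain ⟨q₂, hq₂⟩ := (hnb q₁).2
  have hC : IsCompact ({p : X × X | d p₂ p₁ ≤ d p.1 p.2} ∩
      (closure {z : X | 0 < d p₃ z ∧ 0 < d z q₂} ×ˢ closure {z : X | 0 < d p₃ z ∧ 0 < d z q₂})) :=
    hcomp p₃ q₂ _ hp₂
  refine ⟨Prod.snd '' (({p : X × X | d p₂ p₁ ≤ d p.1 p.2} ∩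
      (closure {z : X | 0 < d p₃ z ∧ 0 < d z q₂} ×ˢ closure {z : X | 0 < d p₃ z ∧ 0 < d z q₂})) ∩
      ({p₂} ×ˢ (univ : Set X))),
    (hC.inter_right (isClosed_singleton.prod isClosed_univ)).image continuous_snd, ?_⟩
  rintro z ⟨hz1, hz2⟩
  have h21 : d p₂ p₁ + d p₁ z ≤ d p₂ z := htri _ _ _ hp₂ hz1
  have hz0 : 0 < d p₂ z := by linarith
  have hq1 : 0 < d p₂ q₁ := by have := htri _ _ _ hz0 hz2; linarith
  have hp₂q₂ : 0 < d p₂ q₂ := by have := htri _ _ _ hq1 hq₂; linarith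
  have hp₂Dia : p₂ ∈ {z : X | 0 < d p₃ z ∧ 0 < d z q₂} := ⟨hp₃, hp₂q₂⟩
  have hzDia : z ∈ {z : X | 0 < d p₃ z ∧ 0 < d z q₂} :=
    ⟨by have := htri _ _ _ hp₃ hz0; linarith, by have := htri _ _ _ hz2 hq₂; linarith⟩
  exact ⟨(p₂, z), ⟨⟨by simp only [mem_setOf_eq]; linarith,
    ⟨subset_closure hp₂Dia, subset_closure hzDia⟩⟩, ⟨rfl, mem_univ _⟩⟩, rfl⟩

set_option synthInstance.maxHeartbeats 1000000 in
set_option maxHeartbeats 1000000 in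
private lemma lms_compact_secondCountable [TopologicalSpace X] [T2Space X] [SigmaCompactSpace X]
    {d : X → X → ℝ} (hcont : Continuous fun p : X × X => d p.1 p.2)
    (hdist : ∀ x y : X, x ≠ y → ∃ z : X, d x z ≠ d y z ∨ d z x ≠ d z y)
    {K : Set X} (hK : IsCompact K) : SecondCountableTopology ↥K := by
  haveI : ∀ n : ℕ, CompactSpace ↥(compactCovering X n) := fun n =>
    isCompact_iff_compactSpace.mp (isCompact_compactCovering X n)
  let F₁ : ∀ n : ℕ, C(X, C(↥(compactCovering X n), ℝ)) := fun n =>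
    ContinuousMap.curry ⟨fun p : X × ↥(compactCovering X n) => d p.2 p.1,
      hcont.comp ((continuous_subtype_val.comp continuous_snd).prodMk continuous_fst)⟩
  let F₂ : ∀ n : ℕ, C(X, C(↥(compactCovering X n), ℝ)) := fun n =>
    ContinuousMap.curry ⟨fun p : X × ↥(compactCovering X n) => d p.1 p.2,
      hcont.comp (continuous_fst.prodMk (continuous_subtype_val.comp continuous_snd))⟩
  let Φ : X → ∀ n : ℕ, C(↥(compactCovering X n), ℝ) × C(↥(compactCovering X n), ℝ) :=
    fun z n => (F₁ n z, F₂ n z)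
  have hΦc : Continuous Φ :=
    continuous_pi fun n => ((F₁ n).continuous).prodMk ((F₂ n).continuous)
  have hΦi : Function.Injective Φ := by
    intro z w hzw
    by_contra hne
    obtain ⟨v, hv⟩ := hdist z w hne
    obtain ⟨n, hn⟩ := exists_mem_compactCovering v
    have h1 : (F₁ n z, F₂ n z) = (F₁ n w, F₂ n w) := congrFun hzw n
    have e2 : d z v = d w v := by
      have h2 := congrArg Prod.snd h1
      have h3 := DFunLike.congr_fun h2 (⟨v, hn⟩ : ↥(compactCovering X n))
      simpa [F₂, ContinuousMap.curry_apply] using h3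
    have e1 : d v z = d v w := by
      have h2 := congrArg Prod.fst h1
      have h3 := DFunLike.congr_fun h2 (⟨v, hn⟩ : ↥(compactCovering X n))
      simpa [F₁, ContinuousMap.curry_apply] using h3
    rcases hv with hv | hv
    exacts [hv e2, hv e1]
  haveI : TopologicalSpace.MetrizableSpace
      ((n : ℕ) → C(↥(compactCovering X n), ℝ) × C(↥(compactCovering X n), ℝ)) :=
    UniformSpace.metrizableSpace
  haveI : CompactSpace ↥K := isCompact_iff_compactSpace.mp hK
  have hemb : Topology.IsClosedEmbedding (fun x : ↥K => Φ ↑x) :=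
    (hΦc.comp continuous_subtype_val).isClosedEmbedding (hΦi.comp Subtype.val_injective)
  haveI : TopologicalSpace.MetrizableSpace ↥K := hemb.toIsEmbedding.metrizableSpace
  infer_instance

private lemma lms_onePoint_secondCountable (Y : Type*) [TopologicalSpace Y] [T2Space Y]
    [LocallyCompactSpace Y] [SigmaCompactSpace Y] [SecondCountableTopology Y] :
    SecondCountableTopology (OnePoint Y) := by
  let e := CompactExhaustion.choice Y
  have hbasis : TopologicalSpace.IsTopologicalBasis
      ((fun s : Set Y => ((↑) : Y → OnePoint Y) '' s) '' TopologicalSpace.countableBasis Y ∪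
        range fun n : ℕ => (((↑) : Y → OnePoint Y) '' e n)ᶜ) := by
    refine TopologicalSpace.isTopologicalBasis_of_isOpen_of_nhds ?_ ?_
    · rintro u (⟨s, hs, rfl⟩ | ⟨n, rfl⟩)
      · exact OnePoint.isOpen_image_coe.mpr (TopologicalSpace.isOpen_of_mem_countableBasis hs)
      · exact OnePoint.isOpen_compl_image_coe.mpr ⟨(e.isCompact n).isClosed, e.isCompact n⟩
    · intro a u hau hu
      by_cases ha : a = OnePoint.infty
      · subst ha
        have h2 := (OnePoint.isOpen_iff_of_mem hau).mp hu
        obtain ⟨n, hn⟩ := e.exists_superset_of_isCompact h2.2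
        refine ⟨(((↑) : Y → OnePoint Y) '' e n)ᶜ, Or.inr ⟨n, rfl⟩,
          fun hmem => OnePoint.infty_notMem_image_coe hmem, ?_⟩
        intro b hb
        by_cases hb' : b = OnePoint.infty
        · subst hb'; exact hau
        · obtain ⟨y, rfl⟩ := OnePoint.ne_infty_iff_exists.mp hb'
          have hy1 : y ∉ e n := fun hy => hb (mem_image_of_mem _ hy)
          by_contra hbu
          exact hy1 (hn hbu)
      · obtain ⟨y, rfl⟩ := OnePoint.ne_infty_iff_exists.mp ha
        have hyu : y ∈ ((↑) : Y → OnePoint Y) ⁻¹' u := hau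
        obtain ⟨s, hsB, hys, hsu⟩ :=
          (TopologicalSpace.isBasis_countableBasis Y).exists_subset_of_mem_open hyu
            (hu.preimage OnePoint.continuous_coe)
        exact ⟨((↑) : Y → OnePoint Y) '' s, Or.inl ⟨s, hsB, rfl⟩, mem_image_of_mem _ hys,
          (image_mono hsu).trans (image_preimage_subset _ _)⟩
  exact hbasis.secondCountableTopology
    (((TopologicalSpace.countable_countableBasis Y).image _).union (countable_range _))

/-- The topology of a countably generated Lorentzian metric space is σ-compact,
second countable and Polish. -/
theorem lms_countably_generated_polish
    (T : TopologicalSpace X) (d : X → X → ℝ)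
    (h : IsLMS T d) (hcg : CountablyGenerated d) :
    letI := T
    SigmaCompactSpace X ∧ SecondCountableTopology X ∧ PolishSpace X := by
  letI := T
  obtain ⟨hpos, htri, ⟨hcont, hcomp⟩, hdist⟩ := h
  obtain ⟨G, hGc, hG⟩ := hcg
  haveI ht2 : T2Space X := lms_t2 hcont hdist
  have hnb : ∀ x : X, (∃ p, 0 < d p x) ∧ (∃ q, 0 < d x q) := fun x =>
    ⟨(hG x).1.imp fun p hp => hp.2, (hG x).2.imp fun q hq => hq.2⟩
  have hA : ∀ p q : X, ∃ K : Set X, IsCompact K ∧ {z : X | 0 < d p z ∧ 0 < d z q} ⊆ K :=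
    lms_exists_compact hpos htri hcomp hnb
  choose Kf hKfc hKfs using hA
  have hIopen : ∀ p q : X, IsOpen {z : X | 0 < d p z ∧ 0 < d z q} := fun p q =>
    (isOpen_lt continuous_const (hcont.comp (continuous_const.prodMk continuous_id))).and
      (isOpen_lt continuous_const (hcont.comp (continuous_id.prodMk continuous_const)))
  haveI hsig : SigmaCompactSpace X := by
    refine SigmaCompactSpace.of_countable ((fun pq : X × X => Kf pq.1 pq.2) '' (G ×ˢ G))
      ((hGc.prod hGc).image _) ?_ ?_
    · rintro s ⟨⟨p, q⟩, ⟨hp, hq⟩, rfl⟩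
      exact hKfc p q
    · apply eq_univ_of_forall
      intro x
      obtain ⟨⟨p, hpG, hpx⟩, ⟨q, hqG, hxq⟩⟩ := hG x
      exact mem_sUnion.mpr ⟨Kf p q, mem_image_of_mem _ (mk_mem_prod hpG hqG),
        hKfs p q ⟨hpx, hxq⟩⟩
  haveI : WeaklyLocallyCompactSpace X := by
    constructor
    intro x
    obtain ⟨⟨p, hpG, hpx⟩, ⟨q, hqG, hxq⟩⟩ := hG x
    exact ⟨Kf p q, hKfc p q,
      Filter.mem_of_superset ((hIopen p q).mem_nhds ⟨hpx, hxq⟩) (hKfs p q)⟩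
  haveI : LocallyCompactSpace X := WeaklyLocallyCompactSpace.locallyCompactSpace
  haveI hGsub : Countable ↥G := hGc.to_subtype
  haveI hU2 : ∀ pq : ↥G × ↥G,
      SecondCountableTopology ↥{z : X | 0 < d ↑pq.1 z ∧ 0 < d z ↑pq.2} := by
    intro pq
    haveI : SecondCountableTopology ↥(Kf ↑pq.1 ↑pq.2) :=
      lms_compact_secondCountable hcont hdist (hKfc _ _)
    exact (Topology.IsEmbedding.inclusion (hKfs (↑pq.1) (↑pq.2))).secondCountableTopology
  haveI hsc : SecondCountableTopology X := by
    refine TopologicalSpace.secondCountableTopology_of_countable_cover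
      (U := fun pq : ↥G × ↥G => {z : X | 0 < d ↑pq.1 z ∧ 0 < d z ↑pq.2})
      (fun pq => hIopen _ _) ?_
    apply eq_univ_of_forall
    intro x
    obtain ⟨⟨p, hpG, hpx⟩, ⟨q, hqG, hxq⟩⟩ := hG x
    exact mem_iUnion.mpr ⟨(⟨p, hpG⟩, ⟨q, hqG⟩), ⟨hpx, hxq⟩⟩
  haveI : SecondCountableTopology (OnePoint X) := lms_onePoint_secondCountable X
  haveI : TopologicalSpace.MetrizableSpace (OnePoint X) := inferInstance
  letI : MetricSpace (OnePoint X) := TopologicalSpace.metrizableSpaceMetric (OnePoint X)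
  haveI : PolishSpace (OnePoint X) := inferInstance
  haveI : PolishSpace ↥(range ((↑) : X → OnePoint X)) := OnePoint.isOpen_range_coe.polishSpace
  have hf : Topology.IsClosedEmbedding
      (Set.codRestrict ((↑) : X → OnePoint X) (range ((↑) : X → OnePoint X))
        (fun x => mem_range_self x)) := by
    refine ⟨OnePoint.isOpenEmbedding_coe.toIsEmbedding.codRestrict _ _, ?_⟩
    have hr : range (Set.codRestrict ((↑) : X → OnePoint X) (range ((↑) : X → OnePoint X))
        (fun x => mem_range_self x)) = univ := by
      apply eq_univ_of_forall
      rintro ⟨y, x, rfl⟩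
      exact ⟨x, rfl⟩
    rw [hr]
    exact isClosed_univ
  exact ⟨hsig, hsc, hf.polishSpace⟩
end

section
/- Let (X,d) be a Lorentzian metric space with no chronological boundary and let J = {(x,y) : ∀p, d(p,y) ≥ d(p,x) and d(x,p) ≥ d(y,p)}. Then: J is a closed subset of X × X; J is reflexive, transitive, and antisymmetric; I ⊆ J; the push-up property holds: if (x,y) ∈ I and (y,z) ∈ J then (x,z) ∈ I, and if (x,y) ∈ J and (y,z) ∈ I then (x,z) ∈ I; and if (x,y) ∈ J and (y,z) ∈ J then d(x,y) + d(y,z) ≤ d(x,z). -/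
open Filter Topology Set

variable {X : Type*}

/-- Properties of the causal relation `J` of a Lorentzian metric space without
chronological boundary: `J` is closed, reflexive, transitive, antisymmetric,
contains `I`, satisfies push-up, and the reverse triangle inequality holds on `J`. -/
theorem lms_causal_relation_properties
    (T : TopologicalSpace X) (d : X → X → ℝ)
    (h : IsLMS T d) (hnb : NoBoundary d) :
    (letI := T; IsClosed {p : X × X | Jrel d p.1 p.2}) ∧
    (∀ x : X, Jrel d x x) ∧
    (∀ x y z : X, Jrel d x y → Jrel d y z → Jrel d x z) ∧
    (∀ x y : X, Jrel d x y → Jrel d y x → x = y) ∧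
    (∀ x y : X, 0 < d x y → Jrel d x y) ∧
    (∀ x y z : X, 0 < d x y → Jrel d y z → 0 < d x z) ∧
    (∀ x y z : X, Jrel d x y → 0 < d y z → 0 < d x z) ∧
    (∀ x y z : X, Jrel d x y → Jrel d y z → d x y + d y z ≤ d x z) := by
  obtain ⟨hnn, hrt, ⟨hcont, _⟩, hsep⟩ := h
  letI := T
  refine ⟨?_, ?_, ?_, ?_, ?_, ?_, ?_, ?_⟩
  · have : {p : X × X | Jrel d p.1 p.2} =
        ⋂ q : X, ({p : X × X | d q p.1 ≤ d q p.2} ∩ {p : X × X | d p.2 q ≤ d p.1 q}) := by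
      ext p; simp [Jrel, Set.mem_iInter, forall_and]
    rw [this]
    refine isClosed_iInter fun q => IsClosed.inter ?_ ?_
    · exact isClosed_le ((hcont.comp (continuous_const.prodMk continuous_fst)))
        ((hcont.comp (continuous_const.prodMk continuous_snd)))
    · exact isClosed_le ((hcont.comp (continuous_snd.prodMk continuous_const)))
        ((hcont.comp (continuous_fst.prodMk continuous_const)))
  · exact fun x p => ⟨le_refl _, le_refl _⟩
  · exact fun x y z hxy hyz p => ⟨(hxy p).1.trans (hyz p).1, (hyz p).2.trans (hxy p).2⟩
  · intro x y hxy hyx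
    by_contra hne
    obtain ⟨z, hz⟩ := hsep x y hne
    rcases hz with hz | hz
    · exact hz (le_antisymm (hyx z).2 (hxy z).2)
    · exact hz (le_antisymm (hxy z).1 (hyx z).1)
  · intro x y hd p
    constructor
    · rcases eq_or_lt_of_le (hnn p x) with h0 | h0
      · exact h0 ▸ hnn p y
      · linarith [hrt p x y h0 hd]
    · rcases eq_or_lt_of_le (hnn y p) with h0 | h0
      · exact h0 ▸ hnn x p
      · linarith [hrt x y p hd h0]
  · exact fun x y z hd hJ => lt_of_lt_of_le hd (hJ x).1
  · exact fun x y z hJ hd => lt_of_lt_of_le hd (hJ z).2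
  · intro x y z hxy hyz
    rcases eq_or_lt_of_le (hnn x y) with h0 | h0
    · rw [← h0]; simpa using (hxy z).2
    · rcases eq_or_lt_of_le (hnn y z) with h1 | h1
      · rw [← h1]; simpa using (hyz x).1
      · exact hrt x y z h0 h1
end

section
/- Let (X,d) be a Lorentzian metric space with no chronological boundary, let C ⊆ X be a compact subset, and let K ⊆ X × X be a closed relation that is reflexive, transitive, and antisymmetric, with I ⊆ K ⊆ J. Then the set K(C) = K⁺(C) ∩ K⁻(C) is compact, where K⁺(C) = {y : ∃x ∈ C, (x,y) ∈ K} and K⁻(C) = {x : ∃y ∈ C, (x,y) ∈ K}. -/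
open Filter Topology Set

variable {X : Type*}

private lemma aux_closed_proj {X : Type*} [TopologicalSpace X] {C : Set X} {K : Set (X × X)}
    (hC : IsCompact C) (hK : IsClosed K) :
    IsClosed {y : X | ∃ x ∈ C, (x, y) ∈ K} := by
  haveI : CompactSpace C := isCompact_iff_compactSpace.mp hC
  have hmap : Continuous (fun p : C × X => ((p.1 : X), p.2)) :=
    (continuous_subtype_val.comp continuous_fst).prodMk continuous_snd
  have h1 : IsClosed ((fun p : C × X => ((p.1 : X), p.2)) ⁻¹' K) := hK.preimage hmap
  have h2 := isClosedMap_snd_of_compactSpace _ h1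
  have heq : Prod.snd '' ((fun p : C × X => ((p.1 : X), p.2)) ⁻¹' K)
      = {y : X | ∃ x ∈ C, (x, y) ∈ K} := by
    ext y
    constructor
    · rintro ⟨⟨c, x⟩, hmem, rfl⟩
      exact ⟨c, c.2, hmem⟩
    · rintro ⟨x, hxC, hxy⟩
      exact ⟨(⟨x, hxC⟩, y), hxy, rfl⟩
  rwa [heq] at h2

/-- In a Lorentzian metric space without chronological boundary, for any
compact set `C` and any closed order `K` with `I ⊆ K ⊆ J`, the set
`K(C) = K⁺(C) ∩ K⁻(C)` is compact. -/
theorem lms_emerald_compact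
    (T : TopologicalSpace X) (d : X → X → ℝ)
    (h : IsLMS T d) (hnb : NoBoundary d)
    (C : Set X) (hC : letI := T; IsCompact C)
    (K : Set (X × X)) (hKclosed : letI := T; IsClosed K)
    (hKrefl : ∀ x : X, (x, x) ∈ K)
    (hKtrans : ∀ x y z : X, (x, y) ∈ K → (y, z) ∈ K → (x, z) ∈ K)
    (hKantisymm : ∀ x y : X, (x, y) ∈ K → (y, x) ∈ K → x = y)
    (hIK : ∀ x y : X, 0 < d x y → (x, y) ∈ K)
    (hKJ : ∀ x y : X, (x, y) ∈ K → Jrel d x y) :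
    letI := T
    IsCompact ({y : X | ∃ x ∈ C, (x, y) ∈ K} ∩ {x : X | ∃ y ∈ C, (x, y) ∈ K}) := by
  letI := T
  obtain ⟨hd0, htri, ⟨hdcont, hcomp⟩, -⟩ := h
  choose pm hpm using fun x => (hnb x).1
  choose qp hqp using fun x => (hnb x).2
  -- continuity helpers
  have hcont1 : ∀ a : X, Continuous (fun z => d a z) := fun a =>
    hdcont.comp (continuous_const.prodMk continuous_id)
  have hcont2 : ∀ a : X, Continuous (fun z => d z a) := fun a =>
    hdcont.comp (continuous_id.prodMk continuous_const)
  -- the open diamonds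
  set U : X → Set X := fun c => {z : X | 0 < d (pm c) z ∧ 0 < d z (qp c)} with hU
  have hUopen : ∀ c, IsOpen (U c) := by
    intro c
    have : U c = (fun z => d (pm c) z) ⁻¹' (Set.Ioi 0) ∩ (fun z => d z (qp c)) ⁻¹' (Set.Ioi 0) :=
      rfl
    rw [this]
    exact ((isOpen_Ioi.preimage (hcont1 (pm c))).inter (isOpen_Ioi.preimage (hcont2 (qp c))))
  have hcover : C ⊆ ⋃ c : X, U c := fun c hc =>
    Set.mem_iUnion.mpr ⟨c, hpm c, hqp c⟩
  obtain ⟨t, ht⟩ := hC.elim_finite_subcover U hUopen hcover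
  -- the big compact set B
  set A : X → X → Set (X × X) := fun i j =>
    {p : X × X | d (pm (pm i)) (pm i) ≤ d p.1 p.2} ∩
      (closure {z : X | 0 < d (pm (pm (pm i))) z ∧ 0 < d z (qp (qp j))} ×ˢ
        closure {z : X | 0 < d (pm (pm (pm i))) z ∧ 0 < d z (qp (qp j))}) with hA
  have hAcomp : ∀ i j : X, IsCompact (A i j) := fun i j =>
    hcomp (pm (pm (pm i))) (qp (qp j)) _ (hpm (pm i))
  set B : Set X := ⋃ i ∈ (t : Set X), ⋃ j ∈ (t : Set X), Prod.snd '' A i j with hB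
  have hBcomp : IsCompact B := by
    apply t.finite_toSet.isCompact_biUnion
    intro i _
    apply t.finite_toSet.isCompact_biUnion
    intro j _
    exact (hAcomp i j).image continuous_snd
  -- K(C) ⊆ B
  have hsub : ({y : X | ∃ x ∈ C, (x, y) ∈ K} ∩ {x : X | ∃ y ∈ C, (x, y) ∈ K}) ⊆ B := by
    rintro z ⟨⟨x, hxC, hxz⟩, ⟨y, hyC, hzy⟩⟩
    obtain ⟨i, hiT, hxU⟩ := Set.mem_iUnion₂.mp (ht hxC)
    obtain ⟨j, hjT, hyU⟩ := Set.mem_iUnion₂.mp (ht hyC)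
    obtain ⟨hpx, -⟩ := hxU
    obtain ⟨-, hyq⟩ := hyU
    set p := pm i
    set p1 := pm p
    set p2 := pm p1
    set q := qp j
    set q1 := qp q
    have hpz : 0 < d p z := lt_of_lt_of_le hpx ((hKJ x z hxz p).1)
    have hzq : 0 < d z q := lt_of_lt_of_le hyq ((hKJ z y hzy q).2)
    have hp1p : 0 < d p1 p := hpm p
    have hp2p1 : 0 < d p2 p1 := hpm p1
    have hqq1 : 0 < d q q1 := hqp q
    have hp1z : 0 < d p1 z := lt_of_lt_of_le (by positivity) (htri p1 p z hp1p hpz)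
    have hp1zε : d p1 p ≤ d p1 z :=
      le_trans (by linarith) (htri p1 p z hp1p hpz)
    have hp2z : 0 < d p2 z := lt_of_lt_of_le (by positivity) (htri p2 p1 z hp2p1 hp1z)
    have hzq1 : 0 < d z q1 := lt_of_lt_of_le (by positivity) (htri z q q1 hzq hqq1)
    have hp1q1 : 0 < d p1 q1 := lt_of_lt_of_le (by positivity) (htri p1 z q1 hp1z hzq1)
    have hmem : (p1, z) ∈ A i j := by
      refine ⟨hp1zε, subset_closure ⟨hp2p1, hp1q1⟩, subset_closure ⟨hp2z, hzq1⟩⟩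
    refine Set.mem_biUnion hiT (Set.mem_biUnion hjT ⟨(p1, z), hmem, rfl⟩)
  -- K(C) is closed
  have hcl1 : IsClosed {y : X | ∃ x ∈ C, (x, y) ∈ K} := aux_closed_proj hC hKclosed
  have hcl2 : IsClosed {x : X | ∃ y ∈ C, (x, y) ∈ K} := by
    have hK' : IsClosed ((fun p : X × X => (p.2, p.1)) ⁻¹' K) :=
      hKclosed.preimage (continuous_snd.prodMk continuous_fst)
    have := aux_closed_proj (K := (fun p : X × X => (p.2, p.1)) ⁻¹' K) hC hK'
    exact this
  exact hBcomp.of_isClosed_subset (hcl1.inter hcl2) hsub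
end

section
/- Let (X,d) be a Lorentzian metric space with no chronological boundary, with topology 𝒯, and assume that for every point p ∈ X one has p ∈ closure(I⁺(p)) and p ∈ closure(I⁻(p)). Then the closure of I in X × X equals the causal relation J, and the Alexandrov topology (the topology generated by the chronological diamonds I(p,q) = I⁺(p) ∩ I⁻(q), p, q ∈ X) coincides with 𝒯. -/
open Filter Topology Set

variable {X : Type*}

section NoGapsAux

variable [t : TopologicalSpace X] {d : X → X → ℝ}

omit t in
/-- Transitivity of the chronological relation, from the reverse triangle inequality. -/
private lemma lms_tpos (_hd0 : ∀ x y : X, 0 ≤ d x y)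
    (htri : ∀ x y z : X, 0 < d x y → 0 < d y z → d x y + d y z ≤ d x z)
    {a b c : X} (h1 : 0 < d a b) (h2 : 0 < d b c) : 0 < d a c :=
  lt_of_lt_of_le (add_pos h1 h2) (htri a b c h1 h2)

/-- Key local lemma: every open neighborhood of a point contains a chronological
diamond containing that point. -/
private lemma lms_key (hd0 : ∀ x y : X, 0 ≤ d x y)
    (htri : ∀ x y z : X, 0 < d x y → 0 < d y z → d x y + d y z ≤ d x z)
    (hcont : Continuous (fun p : X × X => d p.1 p.2))
    (hcomp : ∀ x y : X, ∀ ε : ℝ, 0 < ε →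
      IsCompact ({p : X × X | ε ≤ d p.1 p.2} ∩
        (closure {z : X | 0 < d x z ∧ 0 < d z y} ×ˢ closure {z : X | 0 < d x z ∧ 0 < d z y})))
    (hsep : ∀ x y : X, x ≠ y → ∃ z : X, d x z ≠ d y z ∨ d z x ≠ d z y)
    (hnb : NoBoundary d)
    (hlocal : ∀ p : X, p ∈ closure {q : X | 0 < d p q} ∧ p ∈ closure {q : X | 0 < d q p})
    {U : Set X} (hU : IsOpen U) {x : X} (hx : x ∈ U) :
    ∃ p q : X, (0 < d p x ∧ 0 < d x q) ∧ {z : X | 0 < d p z ∧ 0 < d z q} ⊆ U := by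
  have hc1 : ∀ a : X, Continuous fun z : X => d a z :=
    fun a => hcont.comp (continuous_const.prodMk continuous_id)
  have hc2 : ∀ a : X, Continuous fun z : X => d z a :=
    fun a => hcont.comp (continuous_id.prodMk continuous_const)
  by_contra hcontra
  push_neg at hcontra
  obtain ⟨⟨p₀, hp₀⟩, ⟨q₀, hq₀⟩⟩ := hnb x
  obtain ⟨⟨p₁, hp₁⟩, -⟩ := hnb p₀
  obtain ⟨-, ⟨q₁, hq₁⟩⟩ := hnb q₀
  set δ : ℝ := d p₀ x with hδdef
  have hδpos : 0 < δ := hp₀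
  -- the auxiliary open neighborhood of x
  set W₀ : Set X := {p : X | δ / 2 < d p₀ p} ∩ {q : X | 0 < d q q₀} with hW₀def
  have hW₀open : IsOpen W₀ :=
    ((isOpen_lt continuous_const (hc1 p₀))).inter (isOpen_lt continuous_const (hc2 q₀))
  have hxW₀ : x ∈ W₀ := ⟨by simp only [mem_setOf_eq]; linarith, hq₀⟩
  -- the big diamond D and the compact set K
  set D : Set X := {z : X | 0 < d p₁ z ∧ 0 < d z q₁} with hDdef
  set K : Set (X × X) := {p : X × X | δ / 2 ≤ d p.1 p.2} ∩ (closure D ×ˢ closure D) with hKdef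
  have hK : IsCompact K := hcomp p₁ q₁ (δ / 2) (half_pos hδpos)
  have hK₂ : IsCompact (Prod.snd '' K) := hK.image continuous_snd
  -- the filter of "bad points"
  set S : Set X → Set X := fun V =>
    {z : X | z ∉ U ∧ ∃ p ∈ V ∩ W₀, ∃ q ∈ V ∩ W₀, 0 < d p z ∧ 0 < d z q} with hSdef
  have hmono : Monotone S := by
    intro V V' hVV' z hz
    obtain ⟨hzU, p, hp, q, hq, hpq⟩ := hz
    exact ⟨hzU, p, ⟨hVV' hp.1, hp.2⟩, q, ⟨hVV' hq.1, hq.2⟩, hpq⟩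
  set f : Filter X := (𝓝 x).lift' S with hfdef
  have hSne : ∀ V ∈ 𝓝 x, (S V).Nonempty := by
    intro V hV
    have hVW : V ∩ W₀ ∈ 𝓝 x := inter_mem hV (hW₀open.mem_nhds hxW₀)
    obtain ⟨p, hpV, hpx⟩ := mem_closure_iff_nhds.1 (hlocal x).2 _ hVW
    obtain ⟨q, hqV, hxq⟩ := mem_closure_iff_nhds.1 (hlocal x).1 _ hVW
    obtain ⟨z, hz, hzU⟩ := Set.not_subset.1 (hcontra p q ⟨hpx, hxq⟩)
    exact ⟨z, hzU, p, hpV, q, hqV, hz.1, hz.2⟩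
  have hne : f.NeBot := (Filter.lift'_neBot_iff hmono).2 hSne
  -- every element of `S V` pairs with `p₀` into the compact set `K`
  have hp₀D : p₀ ∈ D := by
    refine ⟨hp₁, ?_⟩
    exact lms_tpos hd0 htri (lms_tpos hd0 htri hp₀ hq₀) hq₁
  have hSsub : ∀ V : Set X, S V ⊆ Prod.snd '' K := by
    rintro V z ⟨hzU, p, hp, q, hq, hpz, hzq⟩
    have hp₀p : δ / 2 < d p₀ p := hp.2.1
    have hp₀ppos : 0 < d p₀ p := lt_of_lt_of_le (half_pos hδpos) hp₀p.le
    have hp₀z : δ / 2 ≤ d p₀ z := by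
      have := htri p₀ p z hp₀ppos hpz
      linarith
    have hzD : z ∈ D := by
      refine ⟨lms_tpos hd0 htri hp₁ (lt_of_lt_of_le (add_pos hp₀ppos hpz)
        (htri p₀ p z hp₀ppos hpz)), ?_⟩
      exact lms_tpos hd0 htri (lms_tpos hd0 htri hzq hq.2.2) hq₁
    exact ⟨(p₀, z), ⟨hp₀z, subset_closure hp₀D, subset_closure hzD⟩, rfl⟩
  have hKf : Prod.snd '' K ∈ f := by
    exact Filter.mem_of_superset (Filter.mem_lift' univ_mem) (hSsub univ)
  -- get a cluster point z of f in the compact set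
  obtain ⟨z, hzK, hcl⟩ := hK₂.exists_clusterPt (f := f) (le_principal_iff.2 hKf)
  have hUc : Uᶜ ∈ f :=
    Filter.mem_of_superset (Filter.mem_lift' (univ_mem : (univ : Set X) ∈ 𝓝 x))
      (fun z hz => hz.1)
  have hzU : z ∉ U := by
    have : z ∈ closure Uᶜ :=
      mem_closure_iff_clusterPt.2 (hcl.mono (le_principal_iff.2 hUc))
    rwa [hU.isClosed_compl.closure_eq] at this
  have hzx : z ≠ x := fun h => hzU (h ▸ hx)
  have hclust := clusterPt_iff_nonempty.1 hcl
  -- Claim A : ∀ w, d w x ≤ d w z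
  have hA : ∀ w : X, d w x ≤ d w z := by
    intro w
    by_contra hlt
    push_neg at hlt
    set c : ℝ := (d w z + d w x) / 2 with hcdef
    have hc1' : d w z < c := by simp only [hcdef]; linarith
    have hc2' : c < d w x := by simp only [hcdef]; linarith
    have hcpos : 0 < c := by have := hd0 w z; simp only [hcdef]; linarith
    have hV : {p : X | c < d w p} ∈ 𝓝 x :=
      (isOpen_lt continuous_const (hc1 w)).mem_nhds hc2'
    have hN : {z' : X | d w z' < c} ∈ 𝓝 z :=
      (isOpen_lt (hc1 w) continuous_const).mem_nhds hc1'
    obtain ⟨z', hz'N, hz'S⟩ := hclust hN (Filter.mem_lift' hV)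
    obtain ⟨-, p, hp, -, -, hpz', -⟩ := hz'S
    have hwp : c < d w p := hp.1
    have := htri w p z' (hcpos.trans hwp) hpz'
    have : c < d w z' := by linarith
    exact absurd hz'N (by simp only [mem_setOf_eq]; linarith)
  -- Claim B : ∀ w, d w z ≤ d w x
  have hB : ∀ w : X, d w z ≤ d w x := by
    intro w
    by_contra hlt
    push_neg at hlt
    set c : ℝ := (d w x + d w z) / 2 with hcdef
    have hc1' : d w x < c := by simp only [hcdef]; linarith
    have hc2' : c < d w z := by simp only [hcdef]; linarith
    have hcpos : 0 < c := by have := hd0 w x; simp only [hcdef]; linarith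
    have hV : {q : X | d w q < c} ∈ 𝓝 x :=
      (isOpen_lt (hc1 w) continuous_const).mem_nhds hc1'
    have hN : {z' : X | c < d w z'} ∈ 𝓝 z :=
      (isOpen_lt continuous_const (hc1 w)).mem_nhds hc2'
    obtain ⟨z', hz'N, hz'S⟩ := hclust hN (Filter.mem_lift' hV)
    obtain ⟨-, -, -, q, hq, -, hz'q⟩ := hz'S
    have hwz' : c < d w z' := hz'N
    have := htri w z' q (hcpos.trans hwz') hz'q
    have hwq : d w q < c := hq.1
    linarith
  -- Claim C : ∀ w, d z w ≤ d x w
  have hC : ∀ w : X, d z w ≤ d x w := by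
    intro w
    by_contra hlt
    push_neg at hlt
    set c : ℝ := (d x w + d z w) / 2 with hcdef
    have hc1' : d x w < c := by simp only [hcdef]; linarith
    have hc2' : c < d z w := by simp only [hcdef]; linarith
    have hcpos : 0 < c := by have := hd0 x w; simp only [hcdef]; linarith
    have hV : {p : X | d p w < c} ∈ 𝓝 x :=
      (isOpen_lt (hc2 w) continuous_const).mem_nhds hc1'
    have hN : {z' : X | c < d z' w} ∈ 𝓝 z :=
      (isOpen_lt continuous_const (hc2 w)).mem_nhds hc2'
    obtain ⟨z', hz'N, hz'S⟩ := hclust hN (Filter.mem_lift' hV)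
    obtain ⟨-, p, hp, -, -, hpz', -⟩ := hz'S
    have hz'w : c < d z' w := hz'N
    have := htri p z' w hpz' (hcpos.trans hz'w)
    have hpw : d p w < c := hp.1
    linarith
  -- Claim D : ∀ w, d x w ≤ d z w
  have hD : ∀ w : X, d x w ≤ d z w := by
    intro w
    by_contra hlt
    push_neg at hlt
    set c : ℝ := (d z w + d x w) / 2 with hcdef
    have hc1' : d z w < c := by simp only [hcdef]; linarith
    have hc2' : c < d x w := by simp only [hcdef]; linarith
    have hcpos : 0 < c := by have := hd0 z w; simp only [hcdef]; linarith
    have hV : {q : X | c < d q w} ∈ 𝓝 x :=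
      (isOpen_lt continuous_const (hc2 w)).mem_nhds hc2'
    have hN : {z' : X | d z' w < c} ∈ 𝓝 z :=
      (isOpen_lt (hc2 w) continuous_const).mem_nhds hc1'
    obtain ⟨z', hz'N, hz'S⟩ := hclust hN (Filter.mem_lift' hV)
    obtain ⟨-, -, -, q, hq, -, hz'q⟩ := hz'S
    have hqw : c < d q w := hq.1
    have := htri z' q w hz'q (hcpos.trans hqw)
    have : c < d z' w := by linarith
    exact absurd hz'N (by simp only [mem_setOf_eq]; linarith)
  obtain ⟨w, hw⟩ := hsep x z (Ne.symm hzx)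
  rcases hw with hw | hw
  · exact hw (le_antisymm (hD w) (hC w))
  · exact hw (le_antisymm (hA w) (hB w))

/-- Main auxiliary theorem, stated with the topology as an instance. -/
private theorem lms_no_gaps_aux (d : X → X → ℝ)
    (h : IsLMS t d) (hnb : NoBoundary d)
    (hlocal : ∀ p : X, p ∈ closure {q : X | 0 < d p q} ∧ p ∈ closure {q : X | 0 < d q p}) :
    (closure {p : X × X | 0 < d p.1 p.2} = {p : X × X | Jrel d p.1 p.2}) ∧
    TopologicalSpace.generateFrom
      {S : Set X | ∃ p q : X, S = {z : X | 0 < d p z ∧ 0 < d z q}} = t := by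
  obtain ⟨hd0, htri, ⟨hcont, hcomp⟩, hsep⟩ := h
  have hc1 : ∀ a : X, Continuous fun z : X => d a z :=
    fun a => hcont.comp (continuous_const.prodMk continuous_id)
  have hc2 : ∀ a : X, Continuous fun z : X => d z a :=
    fun a => hcont.comp (continuous_id.prodMk continuous_const)
  constructor
  · -- closure I = J
    apply subset_antisymm
    · -- closure I ⊆ J, since I ⊆ J and J is closed
      have hJclosed : IsClosed {p : X × X | Jrel d p.1 p.2} := by
        have heq : {p : X × X | Jrel d p.1 p.2} =
            ⋂ w : X, ({p : X × X | d w p.1 ≤ d w p.2} ∩ {p : X × X | d p.2 w ≤ d p.1 w}) := by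
          ext p
          simp only [mem_setOf_eq, mem_iInter, mem_inter_iff, Jrel]
        rw [heq]
        refine isClosed_iInter fun w => IsClosed.inter ?_ ?_
        · exact isClosed_le (((hc1 w).comp continuous_fst)) (((hc1 w).comp continuous_snd))
        · exact isClosed_le (((hc2 w).comp continuous_snd)) (((hc2 w).comp continuous_fst))
      refine closure_minimal ?_ hJclosed
      rintro ⟨a, b⟩ hab
      intro p
      have hab' : 0 < d a b := hab
      constructor
      · by_cases hpa : 0 < d p a
        · have := htri p a b hpa hab
          linarith
        · have := hd0 p a
          have := hd0 p b
          linarith [not_lt.1 hpa]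
      · by_cases hbp : 0 < d b p
        · have := htri a b p hab hbp
          linarith
        · have := hd0 b p
          have := hd0 a p
          linarith [not_lt.1 hbp]
    · -- J ⊆ closure I
      rintro ⟨a, b⟩ hab
      rw [mem_closure_iff_nhds]
      intro s hs
      rw [mem_nhds_prod_iff] at hs
      obtain ⟨u, hu, v, hv, huv⟩ := hs
      obtain ⟨a', ha'u, ha'a⟩ := mem_closure_iff_nhds.1 (hlocal a).2 _ hu
      obtain ⟨b', hb'v, hbb'⟩ := mem_closure_iff_nhds.1 (hlocal b).1 _ hv
      have ha'b : 0 < d a' b := lt_of_lt_of_le ha'a (hab a').1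
      have ha'b' : 0 < d a' b' := lms_tpos hd0 htri ha'b hbb'
      exact ⟨(a', b'), huv ⟨ha'u, hb'v⟩, ha'b'⟩
  · -- Alexandrov topology = t
    apply le_antisymm
    · -- hard direction: every t-open set is Alexandrov-open
      rw [TopologicalSpace.le_def]
      intro U hU
      have hkey : ∀ x ∈ U, ∃ s ∈ {S : Set X | ∃ p q : X, S = {z : X | 0 < d p z ∧ 0 < d z q}},
          x ∈ s ∧ s ⊆ U := by
        intro x hx
        obtain ⟨p, q, ⟨h1, h2⟩, hsub⟩ :=
          lms_key hd0 htri hcont hcomp hsep hnb hlocal hU hx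
        exact ⟨{z : X | 0 < d p z ∧ 0 < d z q}, ⟨p, q, rfl⟩, ⟨h1, h2⟩, hsub⟩
      have hUeq : U = ⋃₀ {s | (s ∈ {S : Set X | ∃ p q : X,
          S = {z : X | 0 < d p z ∧ 0 < d z q}}) ∧ s ⊆ U} := by
        apply subset_antisymm
        · intro x hx
          obtain ⟨s, hs, hxs, hsU⟩ := hkey x hx
          exact ⟨s, ⟨hs, hsU⟩, hxs⟩
        · rintro x ⟨s, ⟨-, hsU⟩, hxs⟩
          exact hsU hxs
      show TopologicalSpace.GenerateOpen _ U
      rw [hUeq]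
      exact TopologicalSpace.GenerateOpen.sUnion _
        (fun s hs => TopologicalSpace.GenerateOpen.basic s hs.1)
    · -- easy direction: diamonds are t-open
      refine le_generateFrom ?_
      rintro s ⟨p, q, rfl⟩
      exact (isOpen_lt continuous_const (hc1 p)).inter (isOpen_lt continuous_const (hc2 q))

end NoGapsAux

/-- No Gaps theorem: in a Lorentzian metric space without chronological boundary,
if every point lies in the closure of its own chronological future and past,
then `closure I = J` and the Alexandrov topology coincides with the LMS topology. -/
theorem lms_no_gaps
    (T : TopologicalSpace X) (d : X → X → ℝ)
    (h : IsLMS T d) (hnb : NoBoundary d)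
    (hlocal : ∀ p : X, letI := T;
      p ∈ closure {q : X | 0 < d p q} ∧ p ∈ closure {q : X | 0 < d q p}) :
    (letI := T;
      closure {p : X × X | 0 < d p.1 p.2} = {p : X × X | Jrel d p.1 p.2}) ∧
    TopologicalSpace.generateFrom
      {S : Set X | ∃ p q : X, S = {z : X | 0 < d p z ∧ 0 < d z q}} = T :=
  lms_no_gaps_aux (t := T) d h hnb hlocal
end

section
/- Let (X,d) be a countably generated Lorentzian metric space, let τ : X → ℝ be a time function, let a < b be reals, and let Q be a dense subset of [a,b] with a, b ∈ Q. Let ζ : Q → X be a map such that τ(ζ(t)) = t for all t ∈ Q, and ζ(t) ≤ ζ(t') whenever t, t' ∈ Q with a ≤ t < t' ≤ b. Then ζ extends to an isocausal curve ζ̄ : [a,b] → X with τ(ζ̄(t)) = t for all t ∈ [a,b] and ζ̄(t) = ζ(t) for t ∈ Q. Moreover, if d(ζ(t),ζ(t')) + d(ζ(t'),ζ(t'')) = d(ζ(t),ζ(t'')) for all t < t' < t'' in Q, then ζ̄ is maximizing. -/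
open Filter Topology Set

variable {X : Type*}

section Aux
variable [TopologicalSpace X]

lemma lms_aux_clusterPt_sup {x : X} {f g : Filter X} :
    ClusterPt x (f ⊔ g) ↔ ClusterPt x f ∨ ClusterPt x g := by
  unfold ClusterPt
  rw [inf_sup_left, Filter.sup_neBot]

lemma lms_aux_exists_near {ζ : ℝ → X} (g : X → ℝ) (hg : Continuous g) {F : Filter ℝ} {z : X}
    (hz : ClusterPt z (Filter.map ζ F)) {A : Set ℝ} (hA : A ∈ F) {δ : ℝ} (hδ : 0 < δ) :
    ∃ u ∈ A, |g (ζ u) - g z| < δ := by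
  have hU : {w : X | |g w - g z| < δ} ∈ 𝓝 z := by
    have hcont : Continuous fun w => |g w - g z| := (hg.sub continuous_const).abs
    exact (isOpen_lt hcont continuous_const).mem_nhds (by simp [hδ])
  obtain ⟨w, hw1, hw2⟩ := clusterPt_iff_nonempty.1 hz hU (Filter.image_mem_map hA)
  obtain ⟨u, huA, rfl⟩ := hw2
  exact ⟨u, huA, hw1⟩

lemma lms_aux_tendsto {C : Set X} (hC : IsCompact C) {F : Filter X} [hF : F.NeBot]
    (hle : F ≤ Filter.principal C) {z : X} (huniq : ∀ z', ClusterPt z' F → z' = z) :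
    F ≤ 𝓝 z := by
  intro U hU
  by_contra hUF
  have hne : (F ⊓ Filter.principal Uᶜ).NeBot := by
    rw [Filter.inf_principal_neBot_iff]
    intro A hA
    rcases Set.not_subset.1 (fun hsub => hUF (Filter.mem_of_superset hA hsub)) with ⟨x, hxA, hxU⟩
    exact ⟨x, hxA, hxU⟩
  haveI := hne
  obtain ⟨z', _, hz'⟩ := hC (f := F ⊓ Filter.principal Uᶜ) (le_trans inf_le_left hle)
  have hzz : z' = z := huniq z' (hz'.mono inf_le_left)
  subst hzz
  have hmem : U ∩ Uᶜ ∈ 𝓝 z' ⊓ (F ⊓ Filter.principal Uᶜ) :=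
    Filter.inter_mem (Filter.mem_inf_of_left hU)
      (Filter.mem_inf_of_right (Filter.mem_inf_of_right (Filter.mem_principal_self _)))
  rw [Set.inter_compl_self] at hmem
  exact hz'.neBot.ne' (Filter.empty_mem_iff_bot.1 hmem)

lemma lms_aux_relA {d : X → X → ℝ} {ζ : ℝ → X} {Q : Set ℝ}
    (hd : Continuous fun p : X × X => d p.1 p.2)
    (hmono : ∀ s ∈ Q, ∀ s' ∈ Q, s ≤ s' → Jrel d (ζ s) (ζ s'))
    {t : ℝ} {S₁ S₂ : Set ℝ} {z₁ z₂ : X}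
    (h₁ : ClusterPt z₁ (Filter.map ζ (𝓝[Q ∩ S₁] t)))
    (h₂ : ClusterPt z₂ (Filter.map ζ (𝓝[Q ∩ S₂] t)))
    (hS : ∀ u ∈ Q ∩ S₁, ∀ᶠ u' in 𝓝[Q ∩ S₂] t, u ≤ u') :
    Jrel d z₁ z₂ := by
  intro p
  have hdl : Continuous fun w : X => d p w := hd.comp (continuous_const.prodMk continuous_id)
  have hdr : Continuous fun w : X => d w p := hd.comp (continuous_id.prodMk continuous_const)
  constructor
  · by_contra hlt
    push_neg at hlt
    have hδ : 0 < (d p z₁ - d p z₂) / 2 := by linarith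
    obtain ⟨u, huA, hu⟩ := lms_aux_exists_near (fun w => d p w) hdl h₁ self_mem_nhdsWithin hδ
    have hA₂ : (Q ∩ S₂) ∩ {u' | u ≤ u'} ∈ 𝓝[Q ∩ S₂] t :=
      Filter.inter_mem self_mem_nhdsWithin (hS u huA)
    obtain ⟨u', hu'A, hu'⟩ := lms_aux_exists_near (fun w => d p w) hdl h₂ hA₂ hδ
    have hm : d p (ζ u) ≤ d p (ζ u') := (hmono u huA.1 u' hu'A.1.1 hu'A.2 p).1
    rw [abs_lt] at hu hu'
    obtain ⟨hu1, hu2⟩ := hu; obtain ⟨hu'1, hu'2⟩ := hu'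
    linarith
  · by_contra hlt
    push_neg at hlt
    have hδ : 0 < (d z₂ p - d z₁ p) / 2 := by linarith
    obtain ⟨u, huA, hu⟩ := lms_aux_exists_near (fun w => d w p) hdr h₁ self_mem_nhdsWithin hδ
    have hA₂ : (Q ∩ S₂) ∩ {u' | u ≤ u'} ∈ 𝓝[Q ∩ S₂] t :=
      Filter.inter_mem self_mem_nhdsWithin (hS u huA)
    obtain ⟨u', hu'A, hu'⟩ := lms_aux_exists_near (fun w => d w p) hdr h₂ hA₂ hδ
    have hm : d (ζ u') p ≤ d (ζ u) p := (hmono u huA.1 u' hu'A.1.1 hu'A.2 p).2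
    rw [abs_lt] at hu hu'
    obtain ⟨hu1, hu2⟩ := hu; obtain ⟨hu'1, hu'2⟩ := hu'
    linarith

lemma lms_aux_relB {d : X → X → ℝ} {ζ : ℝ → X} {Q : Set ℝ}
    (hd : Continuous fun p : X × X => d p.1 p.2)
    (hmono : ∀ s ∈ Q, ∀ s' ∈ Q, s ≤ s' → Jrel d (ζ s) (ζ s'))
    {t : ℝ} {S₁ S₂ : Set ℝ} {z₁ z₂ : X}
    (h₁ : ClusterPt z₁ (Filter.map ζ (𝓝[Q ∩ S₁] t)))
    (h₂ : ClusterPt z₂ (Filter.map ζ (𝓝[Q ∩ S₂] t)))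
    (hS : ∀ u' ∈ Q ∩ S₂, ∀ᶠ u in 𝓝[Q ∩ S₁] t, u ≤ u') :
    Jrel d z₁ z₂ := by
  intro p
  have hdl : Continuous fun w : X => d p w := hd.comp (continuous_const.prodMk continuous_id)
  have hdr : Continuous fun w : X => d w p := hd.comp (continuous_id.prodMk continuous_const)
  constructor
  · by_contra hlt
    push_neg at hlt
    have hδ : 0 < (d p z₁ - d p z₂) / 2 := by linarith
    obtain ⟨u', hu'A, hu'⟩ := lms_aux_exists_near (fun w => d p w) hdl h₂ self_mem_nhdsWithin hδ
    have hA₁ : (Q ∩ S₁) ∩ {u | u ≤ u'} ∈ 𝓝[Q ∩ S₁] t :=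
      Filter.inter_mem self_mem_nhdsWithin (hS u' hu'A)
    obtain ⟨u, huA, hu⟩ := lms_aux_exists_near (fun w => d p w) hdl h₁ hA₁ hδ
    have hm : d p (ζ u) ≤ d p (ζ u') := (hmono u huA.1.1 u' hu'A.1 huA.2 p).1
    rw [abs_lt] at hu hu'
    obtain ⟨hu1, hu2⟩ := hu; obtain ⟨hu'1, hu'2⟩ := hu'
    linarith
  · by_contra hlt
    push_neg at hlt
    have hδ : 0 < (d z₂ p - d z₁ p) / 2 := by linarith
    obtain ⟨u', hu'A, hu'⟩ := lms_aux_exists_near (fun w => d w p) hdr h₂ self_mem_nhdsWithin hδ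
    have hA₁ : (Q ∩ S₁) ∩ {u | u ≤ u'} ∈ 𝓝[Q ∩ S₁] t :=
      Filter.inter_mem self_mem_nhdsWithin (hS u' hu'A)
    obtain ⟨u, huA, hu⟩ := lms_aux_exists_near (fun w => d w p) hdr h₁ hA₁ hδ
    have hm : d (ζ u') p ≤ d (ζ u) p := (hmono u huA.1.1 u' hu'A.1 huA.2 p).2
    rw [abs_lt] at hu hu'
    obtain ⟨hu1, hu2⟩ := hu; obtain ⟨hu'1, hu'2⟩ := hu'
    linarith


lemma lms_aux_clusterPt_eq {Y : Type*} [TopologicalSpace Y] [T2Space Y] {x L : Y} {F : Filter Y}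
    (hx : ClusterPt x F) (hF : F ≤ 𝓝 L) : x = L :=
  t2_iff_nhds.1 inferInstance (hx.neBot.mono (inf_le_inf_left _ hF))

end Aux

/-- A `τ`-parametrized isotone map defined on a dense subset `Q` of `[a,b]`
(containing `a` and `b`) extends to an isocausal curve on `[a,b]` parametrized
by `τ`; if the map satisfies the maximizing condition on `Q`, the extension is
maximizing. -/
theorem lms_curves_from_dense
    (T : TopologicalSpace X) (d : X → X → ℝ)
    (h : IsLMS T d) (hcg : CountablyGenerated d)
    (τ : X → ℝ) (hτ : IsTimeFunction T d τ)
    (a b : ℝ) (hab : a < b)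
    (Q : Set ℝ) (hQsub : Q ⊆ Set.Icc a b) (hQdense : Set.Icc a b ⊆ closure Q)
    (haQ : a ∈ Q) (hbQ : b ∈ Q)
    (ζ : ℝ → X)
    (hpar : ∀ t ∈ Q, τ (ζ t) = t)
    (hmono : ∀ t ∈ Q, ∀ t' ∈ Q, t < t' → Jrel d (ζ t) (ζ t')) :
    ∃ ζ' : ℝ → X,
      IsIsocausalOn T d ζ' (Set.Icc a b) ∧
      (∀ t ∈ Set.Icc a b, τ (ζ' t) = t) ∧
      (∀ t ∈ Q, ζ' t = ζ t) ∧
      ((∀ t ∈ Q, ∀ t' ∈ Q, ∀ t'' ∈ Q, t < t' → t' < t'' →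
          d (ζ t) (ζ t') + d (ζ t') (ζ t'') = d (ζ t) (ζ t'')) →
        MaximizingOn d ζ' (Set.Icc a b)) := by
  letI := T
  obtain ⟨hnonneg, htri, ⟨hd, hcomp⟩, hdist⟩ := h
  obtain ⟨hτc, hτm⟩ := hτ
  -- slice continuity
  have hdl : ∀ p : X, Continuous fun w : X => d p w :=
    fun p => hd.comp (continuous_const.prodMk continuous_id)
  have hdr : ∀ p : X, Continuous fun w : X => d w p :=
    fun p => hd.comp (continuous_id.prodMk continuous_const)
  -- X is Hausdorff
  haveI hT2 : T2Space X := by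
    constructor
    intro x y hxy
    obtain ⟨z, hz⟩ := hdist x y hxy
    have hfx : ∃ f : X → ℝ, Continuous f ∧ f x ≠ f y := by
      rcases hz with hz | hz
      · exact ⟨fun w => d w z, hdr z, hz⟩
      · exact ⟨fun w => d z w, hdl z, hz⟩
    obtain ⟨f, hf, hfxy⟩ := hfx
    obtain ⟨U, V, hU, hV, hxU, hyV, hUV⟩ := t2_separation hfxy
    exact ⟨f ⁻¹' U, f ⁻¹' V, hU.preimage hf, hV.preimage hf, hxU, hyV, hUV.preimage f⟩
  -- basic order facts
  have jrefl : ∀ x : X, Jrel d x x := fun x p => ⟨le_rfl, le_rfl⟩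
  have jtrans : ∀ {x y z : X}, Jrel d x y → Jrel d y z → Jrel d x z :=
    fun hxy hyz p => ⟨(hxy p).1.trans (hyz p).1, (hyz p).2.trans (hxy p).2⟩
  have hmono' : ∀ s ∈ Q, ∀ s' ∈ Q, s ≤ s' → Jrel d (ζ s) (ζ s') := by
    intro s hs s' hs' hle
    rcases eq_or_lt_of_le hle with rfl | hlt
    · exact jrefl _
    · exact hmono s hs s' hs' hlt
  -- the compact container C
  obtain ⟨G, -, hG⟩ := hcg
  obtain ⟨p, -, hpa⟩ := (hG (ζ a)).1
  obtain ⟨q, -, hbq⟩ := (hG (ζ b)).2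
  obtain ⟨p₂, -, hp₂⟩ := (hG p).1
  obtain ⟨q₂, -, hq₂⟩ := (hG q).2
  have haq : 0 < d (ζ a) q := lt_of_lt_of_le hbq ((hmono' a haQ b hbQ hab.le) q).2
  have haq₂ : 0 < d (ζ a) q₂ := lt_of_lt_of_le (by linarith) (htri (ζ a) q q₂ haq hq₂)
  have hpq₂ : 0 < d p q₂ := lt_of_lt_of_le (by linarith) (htri p (ζ a) q₂ hpa haq₂)
  set I₀ : Set X := {z : X | 0 < d p₂ z ∧ 0 < d z q₂} with hI₀def
  have hpI₀ : p ∈ I₀ := ⟨hp₂, hpq₂⟩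
  have hζI₀ : ∀ s ∈ Q, ζ s ∈ I₀ ∧ d p (ζ a) ≤ d p (ζ s) := by
    intro s hs
    have hεs : d p (ζ a) ≤ d p (ζ s) := ((hmono' a haQ s hs (hQsub hs).1) p).1
    have hps : 0 < d p (ζ s) := lt_of_lt_of_le hpa hεs
    have hsq : 0 < d (ζ s) q := lt_of_lt_of_le hbq ((hmono' s hs b hbQ (hQsub hs).2) q).2
    have hsq₂ : 0 < d (ζ s) q₂ := lt_of_lt_of_le (by linarith) (htri (ζ s) q q₂ hsq hq₂)
    have hp₂s : 0 < d p₂ (ζ s) := lt_of_lt_of_le (by linarith) (htri p₂ p (ζ s) hp₂ hps)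
    exact ⟨⟨hp₂s, hsq₂⟩, hεs⟩
  have hK : IsCompact ({pr : X × X | d p (ζ a) ≤ d pr.1 pr.2} ∩
      (closure I₀ ×ˢ closure I₀)) := hcomp p₂ q₂ (d p (ζ a)) hpa
  set C : Set X := Prod.snd '' (({pr : X × X | d p (ζ a) ≤ d pr.1 pr.2} ∩
      (closure I₀ ×ˢ closure I₀)) ∩ (Prod.fst ⁻¹' {p})) with hCdef
  have hCcomp : IsCompact C :=
    (hK.inter_right (isClosed_singleton.preimage continuous_fst)).image continuous_snd
  have hCclosed : IsClosed C := hCcomp.isClosed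
  have hζC : ∀ s ∈ Q, ζ s ∈ C := by
    intro s hs
    refine ⟨(p, ζ s), ⟨⟨(hζI₀ s hs).2, subset_closure hpI₀, subset_closure (hζI₀ s hs).1⟩, rfl⟩, rfl⟩
  -- filters
  have hNB : ∀ t ∈ Set.Icc a b, (𝓝[Q] t).NeBot :=
    fun t ht => mem_closure_iff_nhdsWithin_neBot.1 (hQdense ht)
  have hFleC : ∀ t : ℝ, Filter.map ζ (𝓝[Q] t) ≤ Filter.principal C := by
    intro t
    rw [Filter.le_principal_iff, Filter.mem_map]
    exact Filter.mem_of_superset self_mem_nhdsWithin fun s hs => hζC s hs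
  -- density helpers
  have hQmid : ∀ {s t : ℝ}, a ≤ s → s < t → t ≤ b → ∃ r ∈ Q, s < r ∧ r < t := by
    intro s t hs hst htb
    have hm : (s + t) / 2 ∈ Set.Icc a b := ⟨by linarith, by linarith⟩
    have hmo : (s + t) / 2 ∈ Set.Ioo s t := ⟨by linarith, by linarith⟩
    obtain ⟨r, hr1, hr2⟩ := _root_.mem_closure_iff.1 (hQdense hm) (Set.Ioo s t) isOpen_Ioo hmo
    exact ⟨r, hr2, hr1.1, hr1.2⟩
  have hleftNB : ∀ {t : ℝ}, a < t → t ≤ b → (𝓝[Q ∩ Set.Iio t] t).NeBot := by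
    intro t hat htb
    rw [← mem_closure_iff_nhdsWithin_neBot, Metric.mem_closure_iff]
    intro ε hε
    obtain ⟨r, hrQ, hr1, hr2⟩ := hQmid (le_max_left a (t - ε)) (max_lt hat (by linarith)) htb
    refine ⟨r, ⟨hrQ, hr2⟩, ?_⟩
    rw [Real.dist_eq, abs_lt]
    have hmr := le_max_right a (t - ε)
    exact ⟨by linarith, by linarith⟩
  have hrightNB : ∀ {t : ℝ}, a ≤ t → t < b → (𝓝[Q ∩ Set.Ioi t] t).NeBot := by
    intro t hat htb
    rw [← mem_closure_iff_nhdsWithin_neBot, Metric.mem_closure_iff]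
    intro ε hε
    obtain ⟨r, hrQ, hr1, hr2⟩ := hQmid hat (lt_min htb (by linarith : t < t + ε)) (min_le_left b (t + ε))
    refine ⟨r, ⟨hrQ, hr1⟩, ?_⟩
    have := lt_min_iff.1 hr2
    rw [Real.dist_eq, abs_lt]
    exact ⟨by linarith [this.2], by linarith [this.1, this.2]⟩
  -- tau of cluster points
  have hTAU : ∀ (t : ℝ) (z : X), ClusterPt z (Filter.map ζ (𝓝[Q] t)) → τ z = t := by
    intro t z hz
    by_contra hne
    have hpos : 0 < |t - τ z| / 3 := by
      have : t - τ z ≠ 0 := sub_ne_zero.2 fun hh => hne hh.symm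
      have := abs_pos.2 this
      linarith
    have hA : Q ∩ Set.Ioo (t - |t - τ z| / 3) (t + |t - τ z| / 3) ∈ 𝓝[Q] t :=
      Filter.inter_mem self_mem_nhdsWithin
        (nhdsWithin_le_nhds (Ioo_mem_nhds (by linarith) (by linarith)))
    obtain ⟨u, ⟨huQ, hu1, hu2⟩, hu3⟩ := lms_aux_exists_near τ hτc hz hA hpos
    rw [hpar u huQ] at hu3
    have habs : |t - τ z| ≤ |t - u| + |u - τ z| := abs_sub_le t u (τ z)
    have h1 : |t - u| < |t - τ z| / 3 := abs_lt.2 ⟨by linarith, by linarith⟩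
    linarith
  -- uniqueness of cluster points (CORE)
  have hCORE : ∀ t ∈ Set.Icc a b, ∀ z₁ z₂ : X, ClusterPt z₁ (Filter.map ζ (𝓝[Q] t)) →
      ClusterPt z₂ (Filter.map ζ (𝓝[Q] t)) → z₁ = z₂ := by
    intro t ht z₁ z₂ h₁ h₂
    have hsplit : ∀ z : X, ClusterPt z (Filter.map ζ (𝓝[Q] t)) →
        ClusterPt z (Filter.map ζ (𝓝[Q ∩ Set.Iio t] t)) ∨
        ClusterPt z (Filter.map ζ (𝓝[Q ∩ {t}] t)) ∨
        ClusterPt z (Filter.map ζ (𝓝[Q ∩ Set.Ioi t] t)) := by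
      intro z hz
      have hQeq : Q = (Q ∩ Set.Iio t) ∪ ((Q ∩ {t}) ∪ (Q ∩ Set.Ioi t)) := by
        ext u
        simp only [Set.mem_union, Set.mem_inter_iff, Set.mem_Iio, Set.mem_singleton_iff,
          Set.mem_Ioi]
        constructor
        · intro hu
          rcases lt_trichotomy u t with hc | hc | hc
          · exact Or.inl ⟨hu, hc⟩
          · exact Or.inr (Or.inl ⟨hu, hc⟩)
          · exact Or.inr (Or.inr ⟨hu, hc⟩)
        · rintro (⟨hu, -⟩ | ⟨hu, -⟩ | ⟨hu, -⟩) <;> exact hu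
      rw [hQeq, nhdsWithin_union, nhdsWithin_union, Filter.map_sup, Filter.map_sup,
        lms_aux_clusterPt_sup, lms_aux_clusterPt_sup] at hz
      exact hz
    -- eventual order facts
    have hevL : ∀ u : ℝ, u < t → ∀ S : Set ℝ, ∀ᶠ u' in 𝓝[S] t, u ≤ u' := by
      intro u hu S
      exact Filter.eventually_of_mem (nhdsWithin_le_nhds (Ioi_mem_nhds hu))
        fun x hx => le_of_lt hx
    have hevC : ∀ u : ℝ, u ≤ t → ∀ S : Set ℝ, (∀ x ∈ S, t ≤ x) →
        ∀ᶠ u' in 𝓝[Q ∩ S] t, u ≤ u' := by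
      intro u hu S hSx
      exact Filter.eventually_of_mem self_mem_nhdsWithin fun x hx => hu.trans (hSx x hx.2)
    have hJ : Jrel d z₁ z₂ ∨ Jrel d z₂ z₁ := by
      rcases hsplit z₁ h₁ with c₁ | c₁ | c₁ <;> rcases hsplit z₂ h₂ with c₂ | c₂ | c₂
      · exact Or.inl (lms_aux_relA hd hmono' c₁ c₂ fun u hu => hevL u hu.2 _)
      · exact Or.inl (lms_aux_relA hd hmono' c₁ c₂ fun u hu => hevL u hu.2 _)
      · exact Or.inl (lms_aux_relA hd hmono' c₁ c₂ fun u hu => hevL u hu.2 _)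
      · exact Or.inr (lms_aux_relA hd hmono' c₂ c₁ fun u hu => hevL u hu.2 _)
      · exact Or.inl (lms_aux_relA hd hmono' c₁ c₂ fun u hu =>
          hevC u hu.2.le _ (fun x hx => hx.ge))
      · exact Or.inl (lms_aux_relA hd hmono' c₁ c₂ fun u hu =>
          hevC u hu.2.le _ (fun x hx => hx.le))
      · exact Or.inr (lms_aux_relA hd hmono' c₂ c₁ fun u hu => hevL u hu.2 _)
      · exact Or.inr (lms_aux_relA hd hmono' c₂ c₁ fun u hu =>
          hevC u hu.2.le _ (fun x hx => hx.le))
      · exact Or.inl (lms_aux_relB hd hmono' c₁ c₂ fun u' hu' =>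
          Filter.eventually_of_mem (nhdsWithin_le_nhds (Iio_mem_nhds hu'.2))
            fun x hx => le_of_lt hx)
    by_contra hne
    have ht₁ := hTAU t z₁ h₁
    have ht₂ := hTAU t z₂ h₂
    rcases hJ with hj | hj
    · have := hτm z₁ z₂ ⟨hj, hne⟩; rw [ht₁, ht₂] at this; exact lt_irrefl t this
    · have := hτm z₂ z₁ ⟨hj, Ne.symm hne⟩; rw [ht₁, ht₂] at this; exact lt_irrefl t this
  -- existence of limits and definition of ζ'
  have hexuni : ∀ t, t ∈ Set.Icc a b → ∃ z, Filter.Tendsto ζ (𝓝[Q] t) (𝓝 z) := by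
    intro t ht
    haveI := hNB t ht
    haveI : (Filter.map ζ (𝓝[Q] t)).NeBot := Filter.NeBot.map (hNB t ht) ζ
    obtain ⟨z, -, hz⟩ := hCcomp (f := Filter.map ζ (𝓝[Q] t)) (hFleC t)
    exact ⟨z, lms_aux_tendsto hCcomp (hFleC t) fun z' hz' => hCORE t ht z' z hz' hz⟩
  obtain ⟨ζ', hζ'⟩ : ∃ ζ' : ℝ → X, ∀ t ∈ Set.Icc a b, Filter.Tendsto ζ (𝓝[Q] t) (𝓝 (ζ' t)) :=
    ⟨fun t => if ht : t ∈ Set.Icc a b then Classical.choose (hexuni t ht) else ζ t,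
      fun t ht => by simp only [dif_pos ht]; exact Classical.choose_spec (hexuni t ht)⟩
  -- ζ' agrees with ζ on Q
  have hQeq' : ∀ t ∈ Q, ζ' t = ζ t := by
    intro t htQ
    have ht : t ∈ Set.Icc a b := hQsub htQ
    haveI := hNB t ht
    haveI : (Filter.map ζ (𝓝[Q] t)).NeBot := Filter.NeBot.map (hNB t ht) ζ
    have h1 : ClusterPt (ζ' t) (Filter.map ζ (𝓝[Q] t)) := ClusterPt.of_le_nhds (hζ' t ht)
    have h2 : ClusterPt (ζ t) (Filter.map ζ (𝓝[Q] t)) := by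
      have hp1 : (pure (ζ t) : Filter X) ≤ Filter.map ζ (𝓝[Q] t) := by
        rw [← Filter.map_pure]
        exact Filter.map_mono (pure_le_nhdsWithin htQ)
      exact Filter.neBot_of_le (le_inf (pure_le_nhds _) hp1)
    exact hCORE t ht _ _ h1 h2
  -- parametrization
  have hτζ' : ∀ t ∈ Set.Icc a b, τ (ζ' t) = t := by
    intro t ht
    haveI := hNB t ht
    have h1 : Filter.Tendsto (fun s => τ (ζ s)) (𝓝[Q] t) (𝓝 (τ (ζ' t))) :=
      (hτc.tendsto (ζ' t)).comp (hζ' t ht)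
    have h2 : Filter.Tendsto (fun s => τ (ζ s)) (𝓝[Q] t) (𝓝 t) := by
      have hev : ∀ᶠ s in 𝓝[Q] t, s = τ (ζ s) :=
        Filter.eventually_of_mem self_mem_nhdsWithin fun s hs => (hpar s hs).symm
      exact Filter.Tendsto.congr' hev (tendsto_id.mono_left nhdsWithin_le_nhds)
    exact tendsto_nhds_unique h1 h2
  -- causal relation between ζ' values
  have hJL : ∀ s ∈ Set.Icc a b, ∀ r ∈ Q, s < r → Jrel d (ζ' s) (ζ r) := by
    intro s hs r hr hsr p
    haveI := hNB s hs
    have hmem : Q ∩ Set.Iio r ∈ 𝓝[Q] s :=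
      Filter.inter_mem self_mem_nhdsWithin (nhdsWithin_le_nhds (Iio_mem_nhds hsr))
    constructor
    · refine le_of_tendsto (((hdl p).tendsto (ζ' s)).comp (hζ' s hs)) ?_
      exact Filter.eventually_of_mem hmem fun u hu => ((hmono' u hu.1 r hr hu.2.le) p).1
    · refine ge_of_tendsto (((hdr p).tendsto (ζ' s)).comp (hζ' s hs)) ?_
      exact Filter.eventually_of_mem hmem fun u hu => ((hmono' u hu.1 r hr hu.2.le) p).2
  have hJR : ∀ r ∈ Q, ∀ s ∈ Set.Icc a b, r < s → Jrel d (ζ r) (ζ' s) := by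
    intro r hr s hs hrs p
    haveI := hNB s hs
    have hmem : Q ∩ Set.Ioi r ∈ 𝓝[Q] s :=
      Filter.inter_mem self_mem_nhdsWithin (nhdsWithin_le_nhds (Ioi_mem_nhds hrs))
    constructor
    · refine ge_of_tendsto (((hdl p).tendsto (ζ' s)).comp (hζ' s hs)) ?_
      exact Filter.eventually_of_mem hmem fun u hu => ((hmono' r hr u hu.1 hu.2.le) p).1
    · refine le_of_tendsto (((hdr p).tendsto (ζ' s)).comp (hζ' s hs)) ?_
      exact Filter.eventually_of_mem hmem fun u hu => ((hmono' r hr u hu.1 hu.2.le) p).2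
  have hJ' : ∀ s ∈ Set.Icc a b, ∀ t ∈ Set.Icc a b, s ≤ t → Jrel d (ζ' s) (ζ' t) := by
    intro s hs t ht hst
    rcases eq_or_lt_of_le hst with rfl | hlt
    · exact jrefl _
    · obtain ⟨r, hrQ, h1, h2⟩ := hQmid hs.1 hlt ht.2
      exact jtrans (hJL s hs r hrQ h1) (hJR r hrQ t ht h2)
  -- values of ζ' lie in C
  have hζ'C : ∀ t ∈ Set.Icc a b, ζ' t ∈ C := by
    intro t ht
    haveI := hNB t ht
    exact hCclosed.mem_of_tendsto (hζ' t ht)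
      (Filter.eventually_of_mem self_mem_nhdsWithin fun s hs => hζC s hs)
  -- monotone convergence transfer lemma
  have hmonoTend : ∀ f : ℝ → ℝ, (∀ u ∈ Set.Icc a b, ∀ v ∈ Set.Icc a b, u ≤ v → f u ≤ f v) →
      ∀ t ∈ Set.Icc a b, Filter.Tendsto f (𝓝[Q] t) (𝓝 (f t)) →
      Filter.Tendsto f (𝓝[Set.Icc a b] t) (𝓝 (f t)) := by
    intro f hmf t ht hft
    refine tendsto_order.2 ⟨?_, ?_⟩
    · intro l hl
      rcases eq_or_lt_of_le ht.1 with heq | hat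
      · refine Filter.eventually_of_mem self_mem_nhdsWithin fun u hu => ?_
        have : f t ≤ f u := hmf t ht u hu (heq ▸ hu.1)
        linarith
      · haveI := hleftNB hat ht.2
        have hev : ∀ᶠ u in 𝓝[Q ∩ Set.Iio t] t, l < f u :=
          (hft.mono_left (nhdsWithin_mono t Set.inter_subset_left)) (Ioi_mem_nhds hl)
        obtain ⟨r, hrl, hrmem⟩ :=
          (hev.and (Filter.eventually_of_mem self_mem_nhdsWithin fun x hx => hx)).exists
        refine Filter.eventually_of_mem
          (Filter.inter_mem self_mem_nhdsWithin (nhdsWithin_le_nhds (Ioi_mem_nhds hrmem.2))) ?_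
        rintro u ⟨huI, hur⟩
        exact lt_of_lt_of_le hrl (hmf r (hQsub hrmem.1) u huI (le_of_lt hur))
    · intro l hl
      rcases eq_or_lt_of_le ht.2 with heq | hbt
      · refine Filter.eventually_of_mem self_mem_nhdsWithin fun u hu => ?_
        have : f u ≤ f t := hmf u hu t ht (heq ▸ hu.2)
        linarith
      · haveI := hrightNB ht.1 hbt
        have hev : ∀ᶠ u in 𝓝[Q ∩ Set.Ioi t] t, f u < l :=
          (hft.mono_left (nhdsWithin_mono t Set.inter_subset_left)) (Iio_mem_nhds hl)
        obtain ⟨r, hrl, hrmem⟩ :=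
          (hev.and (Filter.eventually_of_mem self_mem_nhdsWithin fun x hx => hx)).exists
        refine Filter.eventually_of_mem
          (Filter.inter_mem self_mem_nhdsWithin (nhdsWithin_le_nhds (Iio_mem_nhds hrmem.2))) ?_
        rintro u ⟨huI, hur⟩
        exact lt_of_le_of_lt (hmf u huI r (hQsub hrmem.1) (le_of_lt hur)) hrl
  -- continuity
  have hcont : ContinuousOn ζ' (Set.Icc a b) := by
    intro t ht
    haveI hni : (𝓝[Set.Icc a b] t).NeBot :=
      mem_closure_iff_nhdsWithin_neBot.1 (subset_closure ht)
    haveI : (Filter.map ζ' (𝓝[Set.Icc a b] t)).NeBot := Filter.NeBot.map hni ζ'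
    have hle : Filter.map ζ' (𝓝[Set.Icc a b] t) ≤ Filter.principal C := by
      rw [Filter.le_principal_iff, Filter.mem_map]
      exact Filter.mem_of_superset self_mem_nhdsWithin fun s hs => hζ'C s hs
    have huniq : ∀ z', ClusterPt z' (Filter.map ζ' (𝓝[Set.Icc a b] t)) → z' = ζ' t := by
      intro z' hz'
      have key : ∀ p : X, d p z' = d p (ζ' t) ∧ d z' p = d (ζ' t) p := by
        intro p
        have hQtend : Filter.Tendsto (fun u => d p (ζ' u)) (𝓝[Q] t) (𝓝 (d p (ζ' t))) := by
          have h0 : Filter.Tendsto (fun u => d p (ζ u)) (𝓝[Q] t) (𝓝 (d p (ζ' t))) :=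
            ((hdl p).tendsto (ζ' t)).comp (hζ' t ht)
          refine Filter.Tendsto.congr' ?_ h0
          exact Filter.eventually_of_mem self_mem_nhdsWithin fun u hu => by simp only [hQeq' u hu]
        have hl : Filter.Tendsto (fun u => d p (ζ' u)) (𝓝[Set.Icc a b] t) (𝓝 (d p (ζ' t))) :=
          hmonoTend _ (fun u hu v hv huv => ((hJ' u hu v hv huv) p).1) t ht hQtend
        have hQtendr : Filter.Tendsto (fun u => -(d (ζ' u) p)) (𝓝[Q] t)
            (𝓝 (-(d (ζ' t) p))) := by
          have h0 : Filter.Tendsto (fun u => d (ζ' u) p) (𝓝[Q] t) (𝓝 (d (ζ' t) p)) := by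
            have h0' : Filter.Tendsto (fun u => d (ζ u) p) (𝓝[Q] t) (𝓝 (d (ζ' t) p)) :=
              ((hdr p).tendsto (ζ' t)).comp (hζ' t ht)
            refine Filter.Tendsto.congr' ?_ h0'
            exact Filter.eventually_of_mem self_mem_nhdsWithin fun u hu => by simp only [hQeq' u hu]
          exact h0.neg
        have hrneg : Filter.Tendsto (fun u => -(d (ζ' u) p)) (𝓝[Set.Icc a b] t)
            (𝓝 (-(d (ζ' t) p))) :=
          hmonoTend _ (fun u hu v hv huv => neg_le_neg ((hJ' u hu v hv huv) p).2) t ht hQtendr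
        have hr : Filter.Tendsto (fun u => d (ζ' u) p) (𝓝[Set.Icc a b] t)
            (𝓝 (d (ζ' t) p)) := by
          have := hrneg.neg
          simpa using this
        constructor
        · have c1 : ClusterPt (d p z')
              (Filter.map (fun u => d p (ζ' u)) (𝓝[Set.Icc a b] t)) := by
            have := hz'.map ((hdl p).continuousAt) (Filter.tendsto_map (f := fun w : X => d p w))
            rwa [Filter.map_map] at this
          exact lms_aux_clusterPt_eq c1 hl
        · have c1 : ClusterPt (d z' p)
              (Filter.map (fun u => d (ζ' u) p) (𝓝[Set.Icc a b] t)) := by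
            have := hz'.map ((hdr p).continuousAt) (Filter.tendsto_map (f := fun w : X => d w p))
            rwa [Filter.map_map] at this
          exact lms_aux_clusterPt_eq c1 hr
      by_contra hne
      obtain ⟨w, hw⟩ := hdist z' (ζ' t) hne
      exact hw.elim (fun hh => hh (key w).2) (fun hh => hh (key w).1)
    exact lms_aux_tendsto hCcomp hle huniq
  -- strict causality
  have hcausal : ∀ s ∈ Set.Icc a b, ∀ t ∈ Set.Icc a b, s < t → CausalLt d (ζ' s) (ζ' t) := by
    intro s hs t ht hst
    refine ⟨hJ' s hs t ht hst.le, fun heq => hst.ne ?_⟩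
    rw [← hτζ' s hs, heq, hτζ' t ht]
  -- maximizing
  have hmax : (∀ t ∈ Q, ∀ t' ∈ Q, ∀ t'' ∈ Q, t < t' → t' < t'' →
      d (ζ t) (ζ t') + d (ζ t') (ζ t'') = d (ζ t) (ζ t'')) →
      MaximizingOn d ζ' (Set.Icc a b) := by
    intro hQmax t ht t' ht' t'' ht'' h1 h2
    haveI := hNB t ht
    haveI := hNB t' ht'
    haveI := hNB t'' ht''
    set F : Filter (ℝ × ℝ × ℝ) := (𝓝[Q] t) ×ˢ ((𝓝[Q] t') ×ˢ (𝓝[Q] t'')) with hFdef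
    haveI : F.NeBot := by rw [hFdef]; infer_instance
    have l1 : Filter.Tendsto (fun x : ℝ × ℝ × ℝ => ζ x.1) F (𝓝 (ζ' t)) :=
      (hζ' t ht).comp tendsto_fst
    have l2 : Filter.Tendsto (fun x : ℝ × ℝ × ℝ => ζ x.2.1) F (𝓝 (ζ' t')) :=
      (hζ' t' ht').comp (tendsto_fst.comp tendsto_snd)
    have l3 : Filter.Tendsto (fun x : ℝ × ℝ × ℝ => ζ x.2.2) F (𝓝 (ζ' t'')) :=
      (hζ' t'' ht'').comp (tendsto_snd.comp tendsto_snd)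
    have hA : Filter.Tendsto
        (fun x : ℝ × ℝ × ℝ => d (ζ x.1) (ζ x.2.1) + d (ζ x.2.1) (ζ x.2.2)) F
        (𝓝 (d (ζ' t) (ζ' t') + d (ζ' t') (ζ' t''))) :=
      Filter.Tendsto.add
        ((hd.tendsto (ζ' t, ζ' t')).comp (l1.prodMk_nhds l2))
        ((hd.tendsto (ζ' t', ζ' t'')).comp (l2.prodMk_nhds l3))
    have hB : Filter.Tendsto (fun x : ℝ × ℝ × ℝ => d (ζ x.1) (ζ x.2.2)) F
        (𝓝 (d (ζ' t) (ζ' t''))) :=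
      (hd.tendsto (ζ' t, ζ' t'')).comp (l1.prodMk_nhds l3)
    have hEq : ∀ᶠ x : ℝ × ℝ × ℝ in F,
        d (ζ x.1) (ζ x.2.1) + d (ζ x.2.1) (ζ x.2.2) = d (ζ x.1) (ζ x.2.2) := by
      have hmem : (Q ∩ Set.Iio ((t + t') / 2)) ×ˢ
          ((Q ∩ Set.Ioo ((t + t') / 2) ((t' + t'') / 2)) ×ˢ
            (Q ∩ Set.Ioi ((t' + t'') / 2))) ∈ F := by
        rw [hFdef]
        refine Filter.prod_mem_prod ?_ (Filter.prod_mem_prod ?_ ?_)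
        · exact Filter.inter_mem self_mem_nhdsWithin
            (nhdsWithin_le_nhds (Iio_mem_nhds (by linarith)))
        · exact Filter.inter_mem self_mem_nhdsWithin
            (nhdsWithin_le_nhds (Ioo_mem_nhds (by linarith) (by linarith)))
        · exact Filter.inter_mem self_mem_nhdsWithin
            (nhdsWithin_le_nhds (Ioi_mem_nhds (by linarith)))
      refine Filter.eventually_of_mem hmem ?_
      rintro ⟨u, v, w⟩ ⟨⟨huQ, hu⟩, ⟨hvQ, hv1, hv2⟩, ⟨hwQ, hw⟩⟩
      exact hQmax u huQ v hvQ w hwQ (lt_trans hu hv1) (lt_trans hv2 hw)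
    exact tendsto_nhds_unique (hA.congr' hEq) hB
  exact ⟨ζ', ⟨hcont, hcausal⟩, hτζ', hQeq', hmax⟩
end

section
/- Let (X,d) be a countably generated Lorentzian metric space, let K ⊆ X be compact, let σₙ : [aₙ,bₙ] → K be continuous curves and σ : [a,b] → K a continuous curve. For a continuous curve c : [α,β] → K denote by c̃ : ℝ → K its constant extension c̃(t) = c(min(max(t,α),β)). Say σₙ converges uniformly to σ if aₙ → a, bₙ → b, and σ̃ₙ → σ̃ uniformly on ℝ with respect to the unique uniform structure compatible with the compact Hausdorff topology of K. Then σₙ converges uniformly to σ if and only if aₙ → a, bₙ → b, and for every z ∈ X the real-valued functions t ↦ d(z, σ̃ₙ(t)) and t ↦ d(σ̃ₙ(t), z) converge uniformly on ℝ to t ↦ d(z, σ̃(t)) and t ↦ d(σ̃(t), z), respectively. -/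
open Filter Topology Set

variable {X : Type*}

/-- The constant extension of a curve defined on `[α,β]` to all of `ℝ`. -/
def constExt (γ : ℝ → X) (α β : ℝ) : ℝ → X :=
  fun t => γ (min (max t α) β)

/-- Uniform convergence of maps with values in a compact set `K`, with respect to
the unique uniform structure compatible with the compact Hausdorff topology of `K`
(whose entourages are the neighbourhoods of the diagonal). -/
def UnifConvTo (T : TopologicalSpace X) (K : Set X) (f : ℕ → ℝ → X) (g : ℝ → X) : Prop :=
  letI := T
  ∀ U : Set (X × X), IsOpen U → (∀ y ∈ K, (y, y) ∈ U) →
    ∀ᶠ n in Filter.atTop, ∀ t : ℝ, (g t, f n t) ∈ U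


private lemma lms_key_s10 {Y : Type*} [TopologicalSpace Y] (d : Y → Y → ℝ)
    (hd : Continuous fun p : Y × Y => d p.1 p.2)
    (hsep : ∀ x y : Y, x ≠ y → ∃ z : Y, d x z ≠ d y z ∨ d z x ≠ d z y)
    (K : Set Y) (hK : IsCompact K)
    (U : Set (Y × Y)) (hU : IsOpen U) (hdiag : ∀ y ∈ K, (y, y) ∈ U) :
    ∃ (s : Finset Y) (δ : ℝ), 0 < δ ∧ ∀ x ∈ K, ∀ y ∈ K,
      (∀ z ∈ s, |d z x - d z y| < δ ∧ |d x z - d y z| < δ) → (x, y) ∈ U := by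
  set F : Y → Y × Y → ℝ := fun z p => |d z p.1 - d z p.2| + |d p.1 z - d p.2 z| with hF
  have hFc : ∀ z : Y, Continuous (F z) := by
    intro z
    have h1 : Continuous fun p : Y × Y => d z p.1 :=
      hd.comp (continuous_const.prodMk continuous_fst)
    have h2 : Continuous fun p : Y × Y => d z p.2 :=
      hd.comp (continuous_const.prodMk continuous_snd)
    have h3 : Continuous fun p : Y × Y => d p.1 z :=
      hd.comp (continuous_fst.prodMk continuous_const)
    have h4 : Continuous fun p : Y × Y => d p.2 z :=
      hd.comp (continuous_snd.prodMk continuous_const)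
    exact ((h1.sub h2).abs.add ((h3.sub h4).abs))
  set C : Set (Y × Y) := (K ×ˢ K) \ U with hC
  have hCcomp : IsCompact C := (hK.prod hK).diff hU
  by_cases hCe : C.Nonempty
  · have hcover : C ⊆ ⋃ z : Y, {p : Y × Y | 0 < F z p} := by
      rintro ⟨x, y⟩ hp
      have hxy : x ≠ y := by
        rintro rfl
        exact hp.2 (hdiag x hp.1.1)
      obtain ⟨z, hz⟩ := hsep x y hxy
      refine Set.mem_iUnion.2 ⟨z, ?_⟩
      simp only [Set.mem_setOf_eq, hF]
      rcases hz with hz | hz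
      · exact add_pos_of_nonneg_of_pos (abs_nonneg _) (abs_pos.2 (sub_ne_zero.2 hz))
      · exact add_pos_of_pos_of_nonneg (abs_pos.2 (sub_ne_zero.2 hz)) (abs_nonneg _)
    obtain ⟨s, hs⟩ := hCcomp.elim_finite_subcover (fun z => {p : Y × Y | 0 < F z p})
      (fun z => isOpen_lt continuous_const (hFc z)) hcover
    set G : Y × Y → ℝ := fun p => ∑ z ∈ s, F z p with hG
    have hGc : Continuous G := continuous_finset_sum _ (fun z _ => hFc z)
    obtain ⟨p₀, hp₀C, hmin⟩ := hCcomp.exists_isMinOn hCe hGc.continuousOn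
    have hFnonneg : ∀ z : Y, ∀ p : Y × Y, 0 ≤ F z p := fun z p =>
      add_nonneg (abs_nonneg _) (abs_nonneg _)
    have hεpos : 0 < G p₀ := by
      obtain ⟨z₀, hz₀⟩ := Set.mem_iUnion₂.1 (hs hp₀C)
      calc (0:ℝ) < F z₀ p₀ := hz₀.2
        _ ≤ G p₀ := Finset.single_le_sum (fun z _ => hFnonneg z p₀) hz₀.1
    set ε : ℝ := G p₀ with hε
    set n : ℕ := s.card with hn
    have hnpos : (0:ℝ) < 2 * n + 2 := by positivity
    set δ : ℝ := ε / (2 * n + 2) with hδdef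
    have hδpos : 0 < δ := div_pos hεpos hnpos
    refine ⟨s, δ, hδpos, ?_⟩
    intro x hx y hy hzbound
    by_contra hnU
    have hpC : (x, y) ∈ C := ⟨⟨hx, hy⟩, hnU⟩
    have hge : ε ≤ G (x, y) := hmin hpC
    have hle : G (x, y) ≤ (n : ℝ) * (2 * δ) := by
      have : ∀ z ∈ s, F z (x, y) ≤ 2 * δ := by
        intro z hzs
        have := hzbound z hzs
        simp only [hF]
        linarith [this.1, this.2]
      calc G (x, y) ≤ s.card • (2 * δ) := Finset.sum_le_card_nsmul s _ _ this
        _ = (n : ℝ) * (2 * δ) := by simp [hn, nsmul_eq_mul]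
    have hmul : δ * (2 * n + 2) = ε := div_mul_cancel₀ ε (ne_of_gt hnpos)
    nlinarith [hδpos]
  · refine ⟨∅, 1, one_pos, ?_⟩
    intro x hx y hy _
    by_contra hnU
    exact hCe ⟨(x, y), ⟨⟨hx, hy⟩, hnU⟩⟩

/-- Uniform convergence of continuous curves in a compact subset of a countably
generated Lorentzian metric space is equivalent to uniform convergence of the
composed Lorentzian distance functions `d_z ∘ σₙ` and `d^z ∘ σₙ` for every `z`. -/
theorem lms_uniform_convergence_via_d
    (T : TopologicalSpace X) (d : X → X → ℝ)
    (h : IsLMS T d) (hcg : CountablyGenerated d)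
    (K : Set X) (hK : letI := T; IsCompact K)
    (a b : ℝ) (hab : a ≤ b) (an bn : ℕ → ℝ) (hanbn : ∀ n, an n ≤ bn n)
    (σn : ℕ → ℝ → X) (σ : ℝ → X)
    (hσnc : ∀ n, letI := T; ContinuousOn (σn n) (Set.Icc (an n) (bn n)))
    (hσnK : ∀ n, ∀ t ∈ Set.Icc (an n) (bn n), σn n t ∈ K)
    (hσc : letI := T; ContinuousOn σ (Set.Icc a b))
    (hσK : ∀ t ∈ Set.Icc a b, σ t ∈ K) :
    (Filter.Tendsto an Filter.atTop (𝓝 a) ∧ Filter.Tendsto bn Filter.atTop (𝓝 b) ∧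
      UnifConvTo T K (fun n => constExt (σn n) (an n) (bn n)) (constExt σ a b)) ↔
    (Filter.Tendsto an Filter.atTop (𝓝 a) ∧ Filter.Tendsto bn Filter.atTop (𝓝 b) ∧
      ∀ z : X,
        TendstoUniformly (fun n t => d z (constExt (σn n) (an n) (bn n) t))
          (fun t => d z (constExt σ a b t)) Filter.atTop ∧
        TendstoUniformly (fun n t => d (constExt (σn n) (an n) (bn n) t) z)
          (fun t => d (constExt σ a b t) z) Filter.atTop) := by
  letI := T
  obtain ⟨-, -, ⟨hd, -⟩, hsep⟩ := h
  have hmemK : ∀ t : ℝ, constExt σ a b t ∈ K := fun t =>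
    hσK _ ⟨le_min (le_max_right t a) hab, min_le_right _ _⟩
  have hmemKn : ∀ n : ℕ, ∀ t : ℝ, constExt (σn n) (an n) (bn n) t ∈ K := fun n t =>
    hσnK n _ ⟨le_min (le_max_right t (an n)) (hanbn n), min_le_right _ _⟩
  constructor
  · rintro ⟨ha, hb, huc⟩
    refine ⟨ha, hb, fun z => ?_⟩
    constructor
    · rw [Metric.tendstoUniformly_iff]
      intro ε hε
      have h1 : Continuous fun p : X × X => dist (d z p.1) (d z p.2) :=
        Continuous.dist (hd.comp (continuous_const.prodMk continuous_fst))
          (hd.comp (continuous_const.prodMk continuous_snd))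
      have := huc {p : X × X | dist (d z p.1) (d z p.2) < ε}
        (isOpen_lt h1 continuous_const) (fun y _ => by simp [hε])
      filter_upwards [this] with n hn t
      exact hn t
    · rw [Metric.tendstoUniformly_iff]
      intro ε hε
      have h1 : Continuous fun p : X × X => dist (d p.1 z) (d p.2 z) :=
        Continuous.dist (hd.comp (continuous_fst.prodMk continuous_const))
          (hd.comp (continuous_snd.prodMk continuous_const))
      have := huc {p : X × X | dist (d p.1 z) (d p.2 z) < ε}
        (isOpen_lt h1 continuous_const) (fun y _ => by simp [hε])
      filter_upwards [this] with n hn t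
      exact hn t
  · rintro ⟨ha, hb, hz⟩
    refine ⟨ha, hb, ?_⟩
    intro U hU hdiag
    obtain ⟨s, δ, hδ, hkey⟩ := lms_key_s10 d hd hsep K hK U hU hdiag
    have hev : ∀ z ∈ s, ∀ᶠ n in Filter.atTop, ∀ t : ℝ,
        |d z (constExt σ a b t) - d z (constExt (σn n) (an n) (bn n) t)| < δ ∧
        |d (constExt σ a b t) z - d (constExt (σn n) (an n) (bn n) t) z| < δ := by
      intro z _
      have h1 := (hz z).1
      have h2 := (hz z).2
      rw [Metric.tendstoUniformly_iff] at h1 h2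
      filter_upwards [h1 δ hδ, h2 δ hδ] with n hn1 hn2 t
      exact ⟨by simpa [Real.dist_eq] using hn1 t, by simpa [Real.dist_eq] using hn2 t⟩
    filter_upwards [(Filter.eventually_all_finset s).2 hev] with n hn t
    exact hkey _ (hmemK t) _ (hmemKn n t) (fun z hzs => (hn z hzs t))
end

section
/- Let (X,d) be a countably generated Lorentzian metric space, let K ⊆ X be compact, and let σₙ : [a,b] → K and σ : [a,b] → K be isocausal curves such that σₙ(t) → σ(t) for every t ∈ [a,b]. Then σₙ converges to σ uniformly with respect to the unique uniform structure compatible with the compact Hausdorff topology of K. -/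
open Filter Topology Set

variable {X : Type*}

lemma jrel_limit {ι : Type*} {l : Filter ι} [l.NeBot] [TopologicalSpace X]
    {d : X → X → ℝ} (hd : Continuous (fun p : X × X => d p.1 p.2))
    {f g : ι → X} {x y : X} (hf : Tendsto f l (𝓝 x)) (hg : Tendsto g l (𝓝 y))
    (hJ : ∀ᶠ i in l, Jrel d (f i) (g i)) : Jrel d x y := by
  intro p
  have hdl : Continuous (fun w => d p w) := hd.comp (continuous_const.prodMk continuous_id)
  have hdr : Continuous (fun w => d w p) := hd.comp (continuous_id.prodMk continuous_const)
  constructor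
  · exact le_of_tendsto_of_tendsto ((hdl.tendsto x).comp hf)
      ((hdl.tendsto y).comp hg) (hJ.mono fun i hi => (hi p).1)
  · exact le_of_tendsto_of_tendsto ((hdr.tendsto y).comp hg)
      ((hdr.tendsto x).comp hf) (hJ.mono fun i hi => (hi p).2)

/-- Pointwise convergence of isocausal curves with values in a compact set `K`
implies convergence uniform with respect to the unique uniform structure
compatible with the compact Hausdorff topology of `K` (whose entourages are the
neighbourhoods of the diagonal). -/
theorem lms_pointwise_implies_uniform
    (T : TopologicalSpace X) (d : X → X → ℝ)
    (h : IsLMS T d) (hcg : CountablyGenerated d)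
    (K : Set X) (hK : letI := T; IsCompact K)
    (a b : ℝ) (hab : a ≤ b)
    (σn : ℕ → ℝ → X) (σ : ℝ → X)
    (hσn : ∀ n, IsIsocausalOn T d (σn n) (Set.Icc a b))
    (hσ : IsIsocausalOn T d σ (Set.Icc a b))
    (hσnK : ∀ n, ∀ t ∈ Set.Icc a b, σn n t ∈ K)
    (hσK : ∀ t ∈ Set.Icc a b, σ t ∈ K)
    (hpt : ∀ t ∈ Set.Icc a b, letI := T;
      Filter.Tendsto (fun n => σn n t) Filter.atTop (𝓝 (σ t))) :
    letI := T
    ∀ U : Set (X × X), IsOpen U → (∀ y ∈ K, (y, y) ∈ U) →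
      ∀ᶠ n in Filter.atTop, ∀ t ∈ Set.Icc a b, (σ t, σn n t) ∈ U := by
  letI := T
  intro U hU hdiag
  by_contra hcon
  have hd : Continuous (fun p : X × X => d p.1 p.2) := h.2.2.1.1
  have hsep := h.2.2.2
  -- frequently there is a bad time
  have hfreq : ∃ᶠ n in atTop, ∃ t ∈ Set.Icc a b, (σ t, σn n t) ∉ U := by
    rw [Filter.not_eventually] at hcon
    refine hcon.mono fun n hn => ?_
    push_neg at hn
    exact hn
  classical
  -- choose bad times
  let t : ℕ → ℝ := fun n =>
    if hn : ∃ s ∈ Set.Icc a b, (σ s, σn n s) ∉ U then hn.choose else a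
  have htIcc : ∀ n, t n ∈ Set.Icc a b := by
    intro n
    by_cases hn : ∃ s ∈ Set.Icc a b, (σ s, σn n s) ∉ U
    · simp only [t, dif_pos hn]; exact hn.choose_spec.1
    · simp only [t, dif_neg hn]; exact ⟨le_refl a, hab⟩
  set S : Set ℕ := {n | (σ (t n), σn n (t n)) ∉ U} with hS
  have hSfreq : ∃ᶠ n in atTop, n ∈ S := by
    refine hfreq.mono fun n hn => ?_
    have : (σ ((hn.choose : ℝ)), σn n (hn.choose)) ∉ U := hn.choose_spec.2
    simpa only [hS, Set.mem_setOf_eq, t, dif_pos hn] using this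
  -- the ultrafilter
  have hne : (atTop ⊓ 𝓟 S).NeBot := Filter.frequently_iff_neBot.mp hSfreq
  let F : Ultrafilter ℕ := Ultrafilter.of (atTop ⊓ 𝓟 S)
  have hFle : (F : Filter ℕ) ≤ atTop ⊓ 𝓟 S := Ultrafilter.of_le _
  have hFtop : (F : Filter ℕ) ≤ atTop := hFle.trans inf_le_left
  have hSF : S ∈ F := le_principal_iff.mp (hFle.trans inf_le_right)
  -- limit time
  have hmem1 : Set.Icc a b ∈ F.map t := Filter.mem_map.mpr (Filter.univ_mem' htIcc)
  obtain ⟨t₀, ht₀Icc, ht₀⟩ := isCompact_Icc.ultrafilter_le_nhds (F.map t)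
    (le_principal_iff.mpr hmem1)
  have htlim : Tendsto t (F : Filter ℕ) (𝓝 t₀) := ht₀
  have htlim' : Tendsto t (F : Filter ℕ) (𝓝[Set.Icc a b] t₀) :=
    tendsto_nhdsWithin_iff.mpr ⟨htlim, Filter.Eventually.of_forall htIcc⟩
  -- limit point y of σn n (t n)
  have hmem2 : K ∈ F.map (fun n => σn n (t n)) :=
    Filter.mem_map.mpr (Filter.univ_mem' (fun n => hσnK n (t n) (htIcc n)))
  obtain ⟨y, hyK, hy⟩ := hK.ultrafilter_le_nhds (F.map (fun n => σn n (t n)))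
    (le_principal_iff.mpr hmem2)
  have hylim : Tendsto (fun n => σn n (t n)) (F : Filter ℕ) (𝓝 y) := hy
  -- σ (t n) → σ t₀
  have hσlim : Tendsto (fun n => σ (t n)) (F : Filter ℕ) (𝓝 (σ t₀)) :=
    (hσ.1 t₀ ht₀Icc).tendsto.comp htlim'
  -- (σ t₀, y) ∉ U
  have hnotU : (σ t₀, y) ∉ U := by
    have : (σ t₀, y) ∈ Uᶜ :=
      hU.isClosed_compl.mem_of_tendsto (hσlim.prodMk_nhds hylim)
        (Filter.eventually_iff_exists_mem.mpr ⟨S, hSF, fun n hn => hn⟩)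
    exact this
  -- key: Jrel d (σ t₀) y and Jrel d y (σ t₀)
  have hpair : Jrel d (σ t₀) y ∧ Jrel d y (σ t₀) := by
    rcases F.em {n | t n = t₀} with heq | hneq
    · -- t n = t₀ on F
      have hev : ∀ᶠ n in (F : Filter ℕ), t n = t₀ := heq
      have hlim' : Tendsto (fun n => σn n (t n)) (F : Filter ℕ) (𝓝 (σ t₀)) := by
        refine Tendsto.congr' ?_ ((hpt t₀ ht₀Icc).mono_left hFtop)
        exact hev.mono fun n hn => by show σn n t₀ = σn n (t n); rw [hn]
      constructor
      · exact jrel_limit hd hlim' hylim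
          (Filter.Eventually.of_forall fun n p => ⟨le_refl _, le_refl _⟩)
      · exact jrel_limit hd hylim hlim'
          (Filter.Eventually.of_forall fun n p => ⟨le_refl _, le_refl _⟩)
    · rcases F.em {n | t₀ < t n} with hgt | hle
      · -- case t n > t₀ on F
        have hev : ∀ᶠ n in (F : Filter ℕ), t₀ < t n := hgt
        have J1 : Jrel d (σ t₀) y := by
          refine jrel_limit hd ((hpt t₀ ht₀Icc).mono_left hFtop) hylim ?_
          exact hev.mono fun n hn =>
            ((hσn n).2 t₀ ht₀Icc (t n) (htIcc n) hn).1
        have ht₀b : t₀ < b := by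
          obtain ⟨n, hn⟩ := Filter.nonempty_of_mem hgt
          exact lt_of_lt_of_le hn (htIcc n).2
        have J2u : ∀ u ∈ Set.Ioc t₀ b, Jrel d y (σ u) := by
          intro u hu
          have hevu : ∀ᶠ n in (F : Filter ℕ), t n < u :=
            htlim (Iio_mem_nhds hu.1)
          refine jrel_limit hd hylim
            ((hpt u ⟨le_trans ht₀Icc.1 (le_of_lt hu.1), hu.2⟩).mono_left hFtop) ?_
          exact hevu.mono fun n hn =>
            ((hσn n).2 (t n) (htIcc n) u ⟨le_trans ht₀Icc.1 (le_of_lt hu.1), hu.2⟩ hn).1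
        -- approach t₀ from the right
        have J2 : Jrel d y (σ t₀) := by
          set u : ℕ → ℝ := fun m => t₀ + (b - t₀) * (1 / (m + 1 : ℝ)) with hu
          have hum : ∀ m, u m ∈ Set.Ioc t₀ b := by
            intro m
            have h1 : (0 : ℝ) < 1 / (m + 1 : ℝ) := by positivity
            have h2 : (1 : ℝ) / (m + 1 : ℝ) ≤ 1 := by
              rw [div_le_one (by positivity)]
              have : (0:ℝ) ≤ (m : ℝ) := Nat.cast_nonneg m
              linarith
            constructor
            · have : 0 < (b - t₀) * (1 / (m + 1 : ℝ)) := by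
                apply mul_pos (by linarith) h1
              simp only [hu]; linarith
            · have : (b - t₀) * (1 / (m + 1 : ℝ)) ≤ (b - t₀) * 1 := by
                apply mul_le_mul_of_nonneg_left h2 (by linarith)
              simp only [hu]; linarith
          have hulim : Tendsto u atTop (𝓝 t₀) := by
            have h1 : Tendsto (fun m : ℕ => t₀ + (b - t₀) * (1 / (m + 1 : ℝ))) atTop
                (𝓝 (t₀ + (b - t₀) * 0)) :=
              tendsto_const_nhds.add
                (tendsto_const_nhds.mul tendsto_one_div_add_atTop_nhds_zero_nat)
            rw [mul_zero, add_zero] at h1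
            exact h1
          have humIcc : ∀ m, u m ∈ Set.Icc a b := fun m =>
            ⟨le_trans ht₀Icc.1 (le_of_lt (hum m).1), (hum m).2⟩
          have hσu : Tendsto (fun m => σ (u m)) atTop (𝓝 (σ t₀)) :=
            (hσ.1 t₀ ht₀Icc).tendsto.comp
              (tendsto_nhdsWithin_iff.mpr ⟨hulim, Filter.Eventually.of_forall humIcc⟩)
          exact jrel_limit hd tendsto_const_nhds hσu
            (Filter.Eventually.of_forall fun m => J2u (u m) (hum m))
        exact ⟨J1, J2⟩
      · -- case t n < t₀ on F
        have hev : ∀ᶠ n in (F : Filter ℕ), t n < t₀ := by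
          filter_upwards [hneq, hle] with n hn1 hn2
          exact lt_of_le_of_ne (not_lt.mp hn2) hn1
        have J2 : Jrel d y (σ t₀) := by
          refine jrel_limit hd hylim ((hpt t₀ ht₀Icc).mono_left hFtop) ?_
          exact hev.mono fun n hn =>
            ((hσn n).2 (t n) (htIcc n) t₀ ht₀Icc hn).1
        have ht₀a : a < t₀ := by
          obtain ⟨n, hn⟩ := Filter.nonempty_of_mem (Filter.eventually_iff.mp hev)
          exact lt_of_le_of_lt (htIcc n).1 hn
        have J1s : ∀ s ∈ Set.Ico a t₀, Jrel d (σ s) y := by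
          intro s hs
          have hevs : ∀ᶠ n in (F : Filter ℕ), s < t n :=
            htlim (Ioi_mem_nhds hs.2)
          refine jrel_limit hd
            ((hpt s ⟨hs.1, le_trans (le_of_lt hs.2) ht₀Icc.2⟩).mono_left hFtop) hylim ?_
          exact hevs.mono fun n hn =>
            ((hσn n).2 s ⟨hs.1, le_trans (le_of_lt hs.2) ht₀Icc.2⟩ (t n) (htIcc n) hn).1
        have J1 : Jrel d (σ t₀) y := by
          set u : ℕ → ℝ := fun m => t₀ - (t₀ - a) * (1 / (m + 1 : ℝ)) with hu
          have hum : ∀ m, u m ∈ Set.Ico a t₀ := by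
            intro m
            have h1 : (0 : ℝ) < 1 / (m + 1 : ℝ) := by positivity
            have h2 : (1 : ℝ) / (m + 1 : ℝ) ≤ 1 := by
              rw [div_le_one (by positivity)]
              have : (0:ℝ) ≤ (m : ℝ) := Nat.cast_nonneg m
              linarith
            constructor
            · have : (t₀ - a) * (1 / (m + 1 : ℝ)) ≤ (t₀ - a) * 1 := by
                apply mul_le_mul_of_nonneg_left h2 (by linarith)
              simp only [hu]; linarith
            · have : 0 < (t₀ - a) * (1 / (m + 1 : ℝ)) := by
                apply mul_pos (by linarith) h1
              simp only [hu]; linarith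
          have hulim : Tendsto u atTop (𝓝 t₀) := by
            have h1 : Tendsto (fun m : ℕ => t₀ - (t₀ - a) * (1 / (m + 1 : ℝ))) atTop
                (𝓝 (t₀ - (t₀ - a) * 0)) :=
              tendsto_const_nhds.sub
                (tendsto_const_nhds.mul tendsto_one_div_add_atTop_nhds_zero_nat)
            rw [mul_zero, sub_zero] at h1
            exact h1
          have humIcc : ∀ m, u m ∈ Set.Icc a b := fun m =>
            ⟨(hum m).1, le_trans (le_of_lt (hum m).2) ht₀Icc.2⟩
          have hσu : Tendsto (fun m => σ (u m)) atTop (𝓝 (σ t₀)) :=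
            (hσ.1 t₀ ht₀Icc).tendsto.comp
              (tendsto_nhdsWithin_iff.mpr ⟨hulim, Filter.Eventually.of_forall humIcc⟩)
          exact jrel_limit hd hσu tendsto_const_nhds
            (Filter.Eventually.of_forall fun m => J1s (u m) (hum m))
        exact ⟨J1, J2⟩
  -- conclude y = σ t₀
  have hyeq : y = σ t₀ := by
    by_contra hne'
    obtain ⟨z, hz⟩ := hsep (σ t₀) y (Ne.symm hne')
    rcases hz with hz | hz
    · exact hz (le_antisymm ((hpair.2 z).2) ((hpair.1 z).2))
    · exact hz (le_antisymm ((hpair.1 z).1) ((hpair.2 z).1))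
  exact hnotU (hyeq ▸ hdiag (σ t₀) (hσK t₀ ht₀Icc))
end

section
/- Let (X,d) be a Lorentzian metric space, and let σₙ : [0,1] → X and σ : [0,1] → X be isocausal curves such that σₙ(t) → σ(t) for every t ∈ [0,1]. Then limsup_{n→∞} L(σₙ) ≤ L(σ), where L(γ) := inf { Σ_{i=0}^{k-1} d(γ(tᵢ), γ(tᵢ₊₁)) : 0 = t₀ < t₁ < ⋯ < t_k = 1 } is the Lorentzian length. -/
open Filter Topology Set

variable {X : Type*}

/-- The Lorentzian length of a curve `σ : [0,1] → X`: the infimum over finite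
partitions `0 = t₀ < t₁ < ⋯ < t_k = 1` of `Σᵢ d(σ(tᵢ), σ(tᵢ₊₁))`. -/
noncomputable def Llength (d : X → X → ℝ) (σ : ℝ → X) : ℝ :=
  sInf {s : ℝ | ∃ (k : ℕ) (t : ℕ → ℝ), 0 < k ∧ t 0 = 0 ∧ t k = 1 ∧
    (∀ i, i < k → t i < t (i + 1)) ∧
    s = ∑ i ∈ Finset.range k, d (σ (t i)) (σ (t (i + 1)))}

/-- Upper semi-continuity of the Lorentzian length functional: if isocausal
curves `σₙ` converge pointwise to the isocausal curve `σ`, then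
`limsup L(σₙ) ≤ L(σ)`. -/
theorem lms_length_upper_semicontinuous
    (T : TopologicalSpace X) (d : X → X → ℝ) (h : IsLMS T d)
    (σn : ℕ → ℝ → X) (σ : ℝ → X)
    (hσn : ∀ n, IsIsocausalOn T d (σn n) (Set.Icc 0 1))
    (hσ : IsIsocausalOn T d σ (Set.Icc 0 1))
    (hpt : ∀ t ∈ Set.Icc (0 : ℝ) 1, letI := T;
      Filter.Tendsto (fun n => σn n t) Filter.atTop (𝓝 (σ t))) :
    Filter.limsup (fun n => (Llength d (σn n) : EReal)) Filter.atTop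
      ≤ (Llength d σ : EReal) := by
  letI := T
  classical
  set P : (ℝ → X) → Set ℝ := fun γ => {s : ℝ | ∃ (k : ℕ) (t : ℕ → ℝ), 0 < k ∧ t 0 = 0 ∧ t k = 1 ∧
    (∀ i, i < k → t i < t (i + 1)) ∧
    s = ∑ i ∈ Finset.range k, d (γ (t i)) (γ (t (i + 1)))} with hP
  have hbdd : ∀ γ : ℝ → X, BddBelow (P γ) := by
    intro γ
    refine ⟨0, ?_⟩
    rintro s ⟨k, t, hk, h0, h1, hlt, rfl⟩
    exact Finset.sum_nonneg fun i _ => h.1 _ _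
  have hLlen : ∀ γ : ℝ → X, Llength d γ = sInf (P γ) := fun γ => rfl
  -- main step: limsup ≤ s for every s ∈ P σ
  have key : ∀ s ∈ P σ,
      Filter.limsup (fun n => (Llength d (σn n) : EReal)) Filter.atTop ≤ (s : EReal) := by
    rintro s ⟨k, t, hk, h0, h1, hlt, rfl⟩
    -- bounds on partition points
    have hmono : ∀ j, j ≤ k → ∀ i, i ≤ j → t i ≤ t j := by
      intro j
      induction j with
      | zero =>
        intro _ i hi
        have : i = 0 := Nat.le_zero.mp hi
        simp [this]
      | succ n ih =>
        intro hj i hi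
        rcases Nat.lt_or_ge i (n + 1) with hc | hc
        · exact le_trans (ih (by omega) i (by omega)) (le_of_lt (hlt n (by omega)))
        · have : i = n + 1 := by omega
          simp [this]
    have hmem : ∀ i, i ≤ k → t i ∈ Set.Icc (0 : ℝ) 1 := by
      intro i hi
      constructor
      · calc (0:ℝ) = t 0 := h0.symm
          _ ≤ t i := hmono i hi 0 (Nat.zero_le _)
      · calc t i ≤ t k := hmono k le_rfl i hi
          _ = 1 := h1
    -- the sums for σn converge to the sum for σ
    have htend : Filter.Tendsto
        (fun n => ∑ i ∈ Finset.range k, d (σn n (t i)) (σn n (t (i + 1))))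
        Filter.atTop (𝓝 (∑ i ∈ Finset.range k, d (σ (t i)) (σ (t (i + 1))))) := by
      refine tendsto_finset_sum _ fun i hi => ?_
      have hi' : i < k := Finset.mem_range.mp hi
      have h1' := hpt (t i) (hmem i hi'.le)
      have h2' := hpt (t (i + 1)) (hmem (i + 1) hi')
      have hc : Continuous (fun p : X × X => d p.1 p.2) := h.2.2.1.1
      exact (hc.tendsto _).comp (h1'.prodMk_nhds h2')
    -- Llength of σn is at most the corresponding sum
    have hle : ∀ n, Llength d (σn n) ≤ ∑ i ∈ Finset.range k, d (σn n (t i)) (σn n (t (i + 1))) := by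
      intro n
      exact csInf_le (hbdd _) ⟨k, t, hk, h0, h1, hlt, rfl⟩
    calc Filter.limsup (fun n => (Llength d (σn n) : EReal)) Filter.atTop
        ≤ Filter.limsup (fun n =>
            ((∑ i ∈ Finset.range k, d (σn n (t i)) (σn n (t (i + 1))) : ℝ) : EReal))
            Filter.atTop := by
          refine Filter.limsup_le_limsup ?_
          exact Filter.Eventually.of_forall fun n => EReal.coe_le_coe_iff.mpr (hle n)
      _ = ((∑ i ∈ Finset.range k, d (σ (t i)) (σ (t (i + 1))) : ℝ) : EReal) := by
          exact (EReal.tendsto_coe.mpr htend).limsup_eq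
  -- conclude via properties of sInf
  have hne : (P σ).Nonempty := by
    refine ⟨d (σ 0) (σ 1), 1, fun i => (i : ℝ), one_pos, by norm_num, by norm_num, ?_, by simp⟩
    intro i hi
    interval_cases i
    norm_num
  by_contra hcon
  push_neg at hcon
  obtain ⟨z, hz1, hz2⟩ := EReal.exists_between_coe_real hcon
  rw [hLlen] at hz1
  have hz1' : sInf (P σ) < z := EReal.coe_lt_coe_iff.mp hz1
  obtain ⟨s, hsP, hsz⟩ := (csInf_lt_iff (hbdd σ) hne).mp hz1'
  have := key s hsP
  have : (s : EReal) < Filter.limsup (fun n => (Llength d (σn n) : EReal)) Filter.atTop :=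
    lt_trans (EReal.coe_lt_coe_iff.mpr hsz) hz2
  exact absurd (key s hsP) (not_le.mpr this)
end
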